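/- arXiv:1610.07945 — 4 statements merged into one kernel-verified Lean document; each statement's English description precedes it below -/
import Mathlib

section
/- For every integer n ≥ 2, the Bernoulli polynomial B_n(x) has exactly one root in the interval [0, 1/2) and exactly one root in the interval [1/2, 1). -/
open HurwitzZeta Polynomial Set

/-- The `n`-th Bernoulli polynomial evaluated at a real number. -/
noncomputable def bernoulliPoly (n : ℕ) (x : ℝ) : ℝ := Polynomial.aeval x (Polynomial.bernoulli n)

open Real

lemma bp_eq_fun (n : ℕ) (x : ℝ) : bernoulliPoly n x = bernoulliFun n x := by
  simp [bernoulliPoly, bernoulliFun, Polynomial.aeval_def, Polynomial.eval_map]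

lemma contBF (k : ℕ) : Continuous (bernoulliFun k) :=
  (Polynomial.map (algebraMap ℚ ℝ) (Polynomial.bernoulli k)).continuous

lemma bf_one (x : ℝ) : bernoulliFun 1 x = x - 1/2 := by
  simp [bernoulliFun, Polynomial.bernoulli_def, Finset.sum_range_succ, _root_.bernoulli_zero,
    _root_.bernoulli_one]
  ring

lemma odd_symm (m : ℕ) {x : ℝ} (hx : x ∈ Icc (0:ℝ) 1) :
    bernoulliFun (2*m+1) (1-x) = - bernoulliFun (2*m+1) x := by
  cases m with
  | zero =>
    norm_num [bf_one]
    ring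
  | succ m =>
    have hx' : (1-x) ∈ Icc (0:ℝ) 1 := ⟨by linarith [hx.2], by linarith [hx.1]⟩
    set C : ℝ := (-1:ℝ)^(m+1+1) * (2*π)^(2*(m+1)+1)/2/(Nat.factorial (2*(m+1)+1)) with hCdef
    have hC : C ≠ 0 := by
      apply div_ne_zero (div_ne_zero (mul_ne_zero (pow_ne_zero _ (by norm_num))
        (pow_ne_zero _ (by positivity))) two_ne_zero)
      exact_mod_cast (Nat.factorial_ne_zero _)
    have h1 : HasSum (fun n : ℕ => (1:ℝ)/(n:ℝ)^(2*(m+1)+1) * Real.sin (2*π*n*x))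
        (C * bernoulliFun (2*(m+1)+1) x) :=
      hasSum_one_div_nat_pow_mul_sin (Nat.succ_ne_zero m) hx
    have h2 : HasSum (fun n : ℕ => (1:ℝ)/(n:ℝ)^(2*(m+1)+1) * Real.sin (2*π*n*(1-x)))
        (C * bernoulliFun (2*(m+1)+1) (1-x)) :=
      hasSum_one_div_nat_pow_mul_sin (Nat.succ_ne_zero m) hx'
    have hterm : ∀ n : ℕ, (1:ℝ) / (n:ℝ)^(2*(m+1)+1) * Real.sin (2*π*n*(1-x))
        = -((1:ℝ)/(n:ℝ)^(2*(m+1)+1) * Real.sin (2*π*n*x)) := by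
      intro n
      have h : 2*π*(n:ℝ)*(1-x) = (n:ℝ)*(2*π) - 2*π*n*x := by ring
      rw [h, Real.sin_nat_mul_two_pi_sub]; ring
    have h2' : HasSum (fun n : ℕ => (1:ℝ)/(n:ℝ)^(2*(m+1)+1) * Real.sin (2*π*n*x))
        (-(C * bernoulliFun (2*(m+1)+1) (1-x))) := by
      simpa only [hterm, neg_neg] using h2.neg
    have h3 := h1.unique h2'
    have h4 : C * bernoulliFun (2*(m+1)+1) (1-x) = C * (- bernoulliFun (2*(m+1)+1) x) := by
      rw [mul_neg]; linarith
    exact mul_left_cancel₀ hC h4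

lemma oddF_eval_half (m : ℕ) : bernoulliFun (2*m+1) (1/2) = 0 := by
  have h := odd_symm m (x := 1/2) (by norm_num)
  norm_num at h
  linarith

lemma oddF_eval_zero (m : ℕ) : bernoulliFun (2*(m+1)+1) 0 = 0 := by
  have h := odd_symm (m+1) (x := 0) (by norm_num)
  norm_num at h
  have h2 := bernoulliFun_endpoints_eq_of_ne_one (k := 2*(m+1)+1) (by omega)
  linarith

lemma E0_neg (m : ℕ) : (-1:ℝ)^(m+1) * bernoulliFun (2*(m+1)) 0 < 0 := by
  have h : HasSum (fun n : ℕ => (1:ℝ)/(n:ℝ)^(2*(m+1)) * Real.cos (2*π*n*0))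
      ((-1:ℝ)^(m+1+1) * (2*π)^(2*(m+1)) / 2 / (Nat.factorial (2*(m+1))) *
        bernoulliFun (2*(m+1)) 0) :=
    hasSum_one_div_nat_pow_mul_cos (Nat.succ_ne_zero m) (by norm_num)
  have hpos : (1:ℝ) ≤ (-1:ℝ)^(m+1+1) * (2*π)^(2*(m+1)) / 2 / (Nat.factorial (2*(m+1))) *
      bernoulliFun (2*(m+1)) 0 := by
    have := le_hasSum h 1 (fun j _ => by
      have h0 : 2*π*(j:ℝ)*0 = 0 := by ring
      rw [h0, Real.cos_zero, mul_one]
      positivity)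
    simpa using this
  have hf : (0:ℝ) < (Nat.factorial (2*(m+1)) : ℝ) := by exact_mod_cast Nat.factorial_pos _
  have hc : (0:ℝ) < (2*π)^(2*(m+1)) / 2 / (Nat.factorial (2*(m+1))) := by
    have := Real.pi_pos
    positivity
  by_contra hcon
  push_neg at hcon
  rw [pow_succ] at hpos
  have key : (-1:ℝ)^(m+1) * -1 * (2*π)^(2*(m+1)) / 2 / (Nat.factorial (2*(m+1))) *
      bernoulliFun (2*(m+1)) 0 =
      -(((2*π)^(2*(m+1)) / 2 / (Nat.factorial (2*(m+1)))) *
        ((-1:ℝ)^(m+1) * bernoulliFun (2*(m+1)) 0)) := by ring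
  rw [key] at hpos
  linarith [mul_nonneg hc.le hcon]

lemma Ehalf_pos (m : ℕ) : 0 < (-1:ℝ)^(m+1) * bernoulliFun (2*(m+1)) (1/2) := by
  have h : HasSum (fun n : ℕ => (1:ℝ)/(n:ℝ)^(2*(m+1)) * Real.cos (2*π*n*(1/2)))
      ((-1:ℝ)^(m+1+1) * (2*π)^(2*(m+1)) / 2 / (Nat.factorial (2*(m+1))) *
        bernoulliFun (2*(m+1)) (1/2)) :=
    hasSum_one_div_nat_pow_mul_cos (Nat.succ_ne_zero m) (by norm_num)
  have D := hasSum_zeta_two.sub h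
  have hnonneg : ∀ j : ℕ, j ≠ 1 →
      0 ≤ (1:ℝ)/(j:ℝ)^2 - (1:ℝ)/(j:ℝ)^(2*(m+1)) * Real.cos (2*π*j*(1/2)) := by
    intro j hj
    rcases Nat.eq_zero_or_pos j with rfl | hj1
    · norm_num
    · have hj2 : (1:ℝ) ≤ (j:ℝ) := by exact_mod_cast hj1
      have hpow : (j:ℝ)^2 ≤ (j:ℝ)^(2*(m+1)) :=
        pow_le_pow_right₀ hj2 (by omega)
      have hcos : Real.cos (2*π*j*(1/2)) ≤ 1 := Real.cos_le_one _
      have h1 : (1:ℝ)/(j:ℝ)^(2*(m+1)) * Real.cos (2*π*j*(1/2)) ≤ 1/(j:ℝ)^(2*(m+1)) :=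
        mul_le_of_le_one_right (by positivity) hcos
      have h2 : (1:ℝ)/(j:ℝ)^(2*(m+1)) ≤ 1/(j:ℝ)^2 :=
        one_div_le_one_div_of_le (by positivity) hpow
      linarith
  have hle := le_hasSum D 1 (fun j hj => hnonneg j hj)
  have hval : (1:ℝ)/((1:ℕ):ℝ)^2 - (1:ℝ)/((1:ℕ):ℝ)^(2*(m+1)) * Real.cos (2*π*(1:ℕ)*(1/2))
      = 2 := by
    have harg : 2*π*((1:ℕ):ℝ)*(1/2) = π := by push_cast; ring
    rw [harg, Real.cos_pi]
    norm_num
  rw [hval] at hle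
  have hS : (-1:ℝ)^(m+1+1) * (2*π)^(2*(m+1)) / 2 / (Nat.factorial (2*(m+1))) *
      bernoulliFun (2*(m+1)) (1/2) < 0 := by
    nlinarith [Real.pi_lt_d2, Real.pi_pos]
  have hf : (0:ℝ) < (Nat.factorial (2*(m+1)) : ℝ) := by exact_mod_cast Nat.factorial_pos _
  have hc : (0:ℝ) < (2*π)^(2*(m+1)) / 2 / (Nat.factorial (2*(m+1))) := by
    have := Real.pi_pos
    positivity
  by_contra hcon
  push_neg at hcon
  rw [pow_succ] at hS
  have key : (-1:ℝ)^(m+1) * -1 * (2*π)^(2*(m+1)) / 2 / (Nat.factorial (2*(m+1))) *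
      bernoulliFun (2*(m+1)) (1/2) =
      ((2*π)^(2*(m+1)) / 2 / (Nat.factorial (2*(m+1)))) *
        (-((-1:ℝ)^(m+1) * bernoulliFun (2*(m+1)) (1/2))) := by ring
  rw [key] at hS
  linarith [mul_nonneg hc.le (neg_nonneg.mpr hcon)]

lemma hasDerivAt_BF' (k : ℕ) (x : ℝ) :
    HasDerivAt (bernoulliFun (k+1)) (((k:ℝ)+1) * bernoulliFun k x) x := by
  have := hasDerivAt_bernoulliFun (k+1) x
  simpa using this

lemma even_mono (m : ℕ)
    (hkey : ∀ x ∈ Ioo (0:ℝ) (1/2), 0 < (-1:ℝ)^(m+1) * bernoulliFun (2*m+1) x) :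
    StrictMonoOn (fun y => (-1:ℝ)^(m+1) * bernoulliFun (2*m+2) y) (Icc (0:ℝ) (1/2)) := by
  apply strictMonoOn_of_deriv_pos (convex_Icc _ _)
  · exact (continuous_const.mul (contBF _)).continuousOn
  · intro x hx
    rw [interior_Icc] at hx
    have hd : HasDerivAt (fun y => (-1:ℝ)^(m+1) * bernoulliFun (2*m+2) y)
        ((-1:ℝ)^(m+1) * ((((2*m+1 : ℕ):ℝ)+1) * bernoulliFun (2*m+1) x)) x :=
      (hasDerivAt_BF' (2*m+1) x).const_mul _
    rw [hd.deriv]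
    have h1 := hkey x hx
    have h2 : (0:ℝ) < ((2*m+1 : ℕ):ℝ)+1 := by positivity
    nlinarith

lemma key (m : ℕ) : ∀ x ∈ Ioo (0:ℝ) (1/2), 0 < (-1:ℝ)^(m+1) * bernoulliFun (2*m+1) x := by
  induction m with
  | zero =>
    intro x hx
    rw [bf_one]
    norm_num
    linarith [hx.2]
  | succ m ih =>
    intro x hx
    have mono := even_mono m ih
    have hE0 : (-1:ℝ)^(m+1) * bernoulliFun (2*m+2) 0 < 0 := E0_neg m
    have hEh : 0 < (-1:ℝ)^(m+1) * bernoulliFun (2*m+2) (1/2) := Ehalf_pos m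
    have hcont : ContinuousOn (fun y => (-1:ℝ)^(m+1) * bernoulliFun (2*m+2) y)
        (Icc (0:ℝ) (1/2)) := (continuous_const.mul (contBF _)).continuousOn
    obtain ⟨r, hrmem, hr⟩ := intermediate_value_Icc (by norm_num : (0:ℝ) ≤ 1/2) hcont
      (⟨hE0.le, hEh.le⟩ : (0:ℝ) ∈ Icc _ _)
    have hr0 : 0 < r := by
      rcases eq_or_lt_of_le hrmem.1 with h | h
      · exfalso; rw [← h] at hr; simp only at hr; linarith
      · exact h
    have hrh : r < 1/2 := by
      rcases eq_or_lt_of_le hrmem.2 with h | h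
      · exfalso; rw [h] at hr; simp only at hr; linarith
      · exact h
    -- G = (-1)^(m+2) * B_{2m+3}
    have hGd : ∀ y : ℝ, HasDerivAt (fun z => (-1:ℝ)^(m+2) * bernoulliFun (2*m+3) z)
        ((-1:ℝ)^(m+2) * ((((2*m+2 : ℕ):ℝ)+1) * bernoulliFun (2*m+2) y)) y :=
      fun y => (hasDerivAt_BF' (2*m+2) y).const_mul _
    have hGcont : Continuous (fun z => (-1:ℝ)^(m+2) * bernoulliFun (2*m+3) z) :=
      continuous_const.mul (contBF _)
    have hGmono : StrictMonoOn (fun z => (-1:ℝ)^(m+2) * bernoulliFun (2*m+3) z)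
        (Icc (0:ℝ) r) := by
      apply strictMonoOn_of_deriv_pos (convex_Icc _ _) hGcont.continuousOn
      intro y hy
      rw [interior_Icc] at hy
      rw [(hGd y).deriv]
      have hEy : (-1:ℝ)^(m+1) * bernoulliFun (2*m+2) y < 0 := by
        have := mono (⟨hy.1.le, (hy.2.trans hrh).le⟩ : y ∈ Icc (0:ℝ) (1/2))
          (⟨hr0.le, hrh.le⟩ : r ∈ Icc (0:ℝ) (1/2)) hy.2
        have hr' : (-1:ℝ)^(m+1) * bernoulliFun (2*m+2) r = 0 := hr
        simp only at this
        linarith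
      have h2 : (0:ℝ) < ((2*m+2 : ℕ):ℝ)+1 := by positivity
      rw [pow_succ]
      nlinarith
    have hGanti : StrictAntiOn (fun z => (-1:ℝ)^(m+2) * bernoulliFun (2*m+3) z)
        (Icc r (1/2)) := by
      apply strictAntiOn_of_deriv_neg (convex_Icc _ _) hGcont.continuousOn
      intro y hy
      rw [interior_Icc] at hy
      rw [(hGd y).deriv]
      have hEy : 0 < (-1:ℝ)^(m+1) * bernoulliFun (2*m+2) y := by
        have := mono (⟨hr0.le, hrh.le⟩ : r ∈ Icc (0:ℝ) (1/2))
          (⟨(hr0.trans hy.1).le, hy.2.le⟩ : y ∈ Icc (0:ℝ) (1/2)) hy.1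
        have hr' : (-1:ℝ)^(m+1) * bernoulliFun (2*m+2) r = 0 := hr
        simp only at this
        linarith
      have h2 : (0:ℝ) < ((2*m+2 : ℕ):ℝ)+1 := by positivity
      rw [pow_succ]
      nlinarith
    have hG0 : (-1:ℝ)^(m+2) * bernoulliFun (2*m+3) 0 = 0 := by
      rw [show (2*m+3) = 2*(m+1)+1 from by omega, oddF_eval_zero m, mul_zero]
    have hGh : (-1:ℝ)^(m+2) * bernoulliFun (2*m+3) (1/2) = 0 := by
      rw [show (2*m+3) = 2*(m+1)+1 from by omega, oddF_eval_half (m+1), mul_zero]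
    show 0 < (-1:ℝ)^(m+2) * bernoulliFun (2*m+3) x
    rcases le_or_gt x r with hxr | hxr
    · have := hGmono (⟨le_refl _, hr0.le⟩ : (0:ℝ) ∈ Icc (0:ℝ) r)
        (⟨hx.1.le, hxr⟩ : x ∈ Icc (0:ℝ) r) hx.1
      simp only at this
      linarith
    · have := hGanti (⟨hxr.le, hx.2.le⟩ : x ∈ Icc r (1/2))
        (⟨hrmem.2, le_refl _⟩ : (1/2:ℝ) ∈ Icc r (1/2)) hx.2
      simp only at this
      linarith

lemma neg_pow_ne (m : ℕ) : ((-1:ℝ)^(m+1)) ≠ 0 := pow_ne_zero _ (by norm_num)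

lemma even_thm (m : ℕ) :
    (∃! x : ℝ, x ∈ Ico (0:ℝ) (1/2) ∧ bernoulliFun (2*m+2) x = 0) ∧
    (∃! x : ℝ, x ∈ Ico (1/2:ℝ) 1 ∧ bernoulliFun (2*m+2) x = 0) := by
  have mono := even_mono m (key m)
  have hE0 : (-1:ℝ)^(m+1) * bernoulliFun (2*m+2) 0 < 0 := E0_neg m
  have hEh : 0 < (-1:ℝ)^(m+1) * bernoulliFun (2*m+2) (1/2) := Ehalf_pos m
  have hcont : ContinuousOn (fun y => (-1:ℝ)^(m+1) * bernoulliFun (2*m+2) y)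
      (Icc (0:ℝ) (1/2)) := (continuous_const.mul (contBF _)).continuousOn
  constructor
  · obtain ⟨r, hrmem, hr⟩ := intermediate_value_Icc (by norm_num : (0:ℝ) ≤ 1/2) hcont
      (⟨hE0.le, hEh.le⟩ : (0:ℝ) ∈ Icc _ _)
    have hr' : (-1:ℝ)^(m+1) * bernoulliFun (2*m+2) r = 0 := hr
    have hr0 : 0 < r := by
      rcases eq_or_lt_of_le hrmem.1 with h | h
      · exfalso; rw [← h] at hr'; linarith
      · exact h
    have hrh : r < 1/2 := by
      rcases eq_or_lt_of_le hrmem.2 with h | h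
      · exfalso; rw [h] at hr'; linarith
      · exact h
    refine ⟨r, ⟨⟨hr0.le, hrh⟩, ?_⟩, ?_⟩
    · have := mul_eq_zero.mp hr'
      rcases this with h | h
      · exact absurd h (neg_pow_ne m)
      · exact h
    · rintro y ⟨hymem, hy⟩
      apply mono.injOn (⟨hymem.1, hymem.2.le⟩ : y ∈ Icc (0:ℝ) (1/2)) hrmem
      show (-1:ℝ)^(m+1) * bernoulliFun (2*m+2) y = (-1:ℝ)^(m+1) * bernoulliFun (2*m+2) r
      rw [hy, hr', mul_zero]
  · have anti : StrictAntiOn (fun y => (-1:ℝ)^(m+1) * bernoulliFun (2*m+2) y)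
        (Icc (1/2:ℝ) 1) := by
      apply strictAntiOn_of_deriv_neg (convex_Icc _ _)
        (continuous_const.mul (contBF _)).continuousOn
      intro y hy
      rw [interior_Icc] at hy
      have hd : HasDerivAt (fun z => (-1:ℝ)^(m+1) * bernoulliFun (2*m+2) z)
          ((-1:ℝ)^(m+1) * ((((2*m+1 : ℕ):ℝ)+1) * bernoulliFun (2*m+1) y)) y :=
        (hasDerivAt_BF' (2*m+1) y).const_mul _
      show deriv (fun z => (-1:ℝ)^(m+1) * bernoulliFun (2*m+2) z) y < 0
      rw [hd.deriv]
      have hsym := odd_symm m (x := y) ⟨by linarith [hy.1], hy.2.le⟩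
      have hk := key m (1-y) ⟨by linarith [hy.2], by linarith [hy.1]⟩
      rw [hsym] at hk
      have h2 : (0:ℝ) < ((2*m+1 : ℕ):ℝ)+1 := by positivity
      nlinarith
    have hE1 : (-1:ℝ)^(m+1) * bernoulliFun (2*m+2) 1 < 0 := by
      rw [bernoulliFun_endpoints_eq_of_ne_one (by omega : 2*m+2 ≠ 1)]
      exact hE0
    have hcont' : ContinuousOn (fun y => (-1:ℝ)^(m+1) * bernoulliFun (2*m+2) y)
        (Icc (1/2:ℝ) 1) := (continuous_const.mul (contBF _)).continuousOn
    obtain ⟨r, hrmem, hr⟩ := intermediate_value_Icc' (by norm_num : (1/2:ℝ) ≤ 1) hcont'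
      (⟨hE1.le, hEh.le⟩ : (0:ℝ) ∈ Icc _ _)
    have hr' : (-1:ℝ)^(m+1) * bernoulliFun (2*m+2) r = 0 := hr
    have hr0 : 1/2 < r := by
      rcases eq_or_lt_of_le hrmem.1 with h | h
      · exfalso; rw [← h] at hr'; linarith
      · exact h
    have hrh : r < 1 := by
      rcases eq_or_lt_of_le hrmem.2 with h | h
      · exfalso; rw [h] at hr'; linarith
      · exact h
    refine ⟨r, ⟨⟨hr0.le, hrh⟩, ?_⟩, ?_⟩
    · rcases mul_eq_zero.mp hr' with h | h
      · exact absurd h (neg_pow_ne m)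
      · exact h
    · rintro y ⟨hymem, hy⟩
      apply anti.injOn (⟨hymem.1, hymem.2.le⟩ : y ∈ Icc (1/2:ℝ) 1) hrmem
      show (-1:ℝ)^(m+1) * bernoulliFun (2*m+2) y = (-1:ℝ)^(m+1) * bernoulliFun (2*m+2) r
      rw [hy, hr', mul_zero]

lemma odd_thm (m : ℕ) :
    (∃! x : ℝ, x ∈ Ico (0:ℝ) (1/2) ∧ bernoulliFun (2*(m+1)+1) x = 0) ∧
    (∃! x : ℝ, x ∈ Ico (1/2:ℝ) 1 ∧ bernoulliFun (2*(m+1)+1) x = 0) := by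
  constructor
  · refine ⟨0, ⟨⟨le_refl _, by norm_num⟩, oddF_eval_zero m⟩, ?_⟩
    rintro y ⟨hymem, hy⟩
    by_contra hy0
    have hyIoo : y ∈ Ioo (0:ℝ) (1/2) := ⟨lt_of_le_of_ne hymem.1 (Ne.symm hy0), hymem.2⟩
    have := key (m+1) y hyIoo
    rw [hy, mul_zero] at this
    exact lt_irrefl 0 this
  · refine ⟨1/2, ⟨⟨le_refl _, by norm_num⟩, oddF_eval_half (m+1)⟩, ?_⟩
    rintro y ⟨hymem, hy⟩
    by_contra hyh
    have hyIoo : y ∈ Ioo (1/2:ℝ) 1 := ⟨lt_of_le_of_ne hymem.1 (Ne.symm hyh), hymem.2⟩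
    have hsym := odd_symm (m+1) (x := y) ⟨by linarith [hyIoo.1], hyIoo.2.le⟩
    rw [hy, neg_zero] at hsym
    have := key (m+1) (1-y) ⟨by linarith [hyIoo.2], by linarith [hyIoo.1]⟩
    rw [hsym, mul_zero] at this
    exact lt_irrefl 0 this

/-- For every integer `n ≥ 2`, the Bernoulli polynomial `B_n` has exactly one root in
`[0, 1/2)` and exactly one root in `[1/2, 1)`. -/
theorem bernoulli_poly_exactly_one_root (n : ℕ) (hn : 2 ≤ n) :
    (∃! x : ℝ, x ∈ Set.Ico (0 : ℝ) (1 / 2) ∧ bernoulliPoly n x = 0) ∧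
      (∃! x : ℝ, x ∈ Set.Ico (1 / 2 : ℝ) 1 ∧ bernoulliPoly n x = 0) := by
  simp only [bp_eq_fun]
  rcases Nat.even_or_odd n with he | ho
  · obtain ⟨k, hk⟩ := he
    obtain ⟨m, hm⟩ : ∃ m, k = m + 1 := ⟨k - 1, by omega⟩
    have hn' : n = 2*m+2 := by omega
    rw [hn']
    exact even_thm m
  · obtain ⟨k, hk⟩ := ho
    obtain ⟨m, hm⟩ : ∃ m, k = m + 1 := ⟨k - 1, by omega⟩
    have hn' : n = 2*(m+1)+1 := by omega
    rw [hn']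
    exact odd_thm m
end

section
/- Let k be a positive integer. Then (−1)^{k−1} B_{2k+1}(x) > 0 for all x with 0 < x < 1/2, and (−1)^{k−1} B_{2k+1}(x) < 0 for all x with 1/2 < x < 1, where B_n denotes the n-th Bernoulli polynomial. -/
open HurwitzZeta Polynomial Set

open Real
lemma abs_sin_nat_mul_le (θ : ℝ) (h0 : 0 ≤ θ) (hπ : θ ≤ π) (n : ℕ) :
    |Real.sin (n * θ)| ≤ n * Real.sin θ := by
  induction n with
  | zero => simp
  | succ n ih =>
    have hs : 0 ≤ Real.sin θ := Real.sin_nonneg_of_nonneg_of_le_pi h0 hπ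
    have h1 : ((n : ℝ) + 1) * θ = n * θ + θ := by ring
    push_cast
    rw [h1, Real.sin_add]
    calc |Real.sin (n * θ) * Real.cos θ + Real.cos (n * θ) * Real.sin θ|
        ≤ |Real.sin (n * θ) * Real.cos θ| + |Real.cos (n * θ) * Real.sin θ| := abs_add_le _ _
      _ ≤ |Real.sin (n * θ)| + Real.sin θ := by
          rw [abs_mul, abs_mul, abs_of_nonneg hs]
          have := Real.abs_cos_le_one θ
          have := Real.abs_cos_le_one ((n : ℝ) * θ)
          nlinarith [abs_nonneg (Real.sin ((n:ℝ) * θ))]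
      _ ≤ n * Real.sin θ + Real.sin θ := add_le_add ih le_rfl
      _ = ((n : ℝ) + 1) * Real.sin θ := by ring

lemma key_pos (k : ℕ) (hk : 0 < k) (x : ℝ) (hx0 : 0 < x) (hx2 : x < 1 / 2) :
    0 < (-1 : ℝ) ^ (k + 1) * (2 * π) ^ (2 * k + 1) / 2 / ((2 * k + 1).factorial : ℝ) *
        (Polynomial.map (algebraMap ℚ ℝ) (Polynomial.bernoulli (2 * k + 1))).eval x := by
  have hπ := Real.pi_pos
  set θ : ℝ := 2 * π * x with hθ
  have hθ0 : 0 < θ := by positivity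
  have hθπ : θ < π := by
    rw [hθ]; nlinarith
  have hs : 0 < Real.sin θ := Real.sin_pos_of_pos_of_lt_pi hθ0 hθπ
  have hx01 : x ∈ Icc (0 : ℝ) 1 := ⟨hx0.le, by linarith⟩
  have hS := hasSum_one_div_nat_pow_mul_sin (k := k) hk.ne' hx01
  set S : ℝ := (-1 : ℝ) ^ (k + 1) * (2 * π) ^ (2 * k + 1) / 2 / ((2 * k + 1).factorial : ℝ) *
      (Polynomial.map (algebraMap ℚ ℝ) (Polynomial.bernoulli (2 * k + 1))).eval x with hSdef
  -- g n = f n + sin θ / n ^ 2 is nonnegative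
  have hg : HasSum (fun n : ℕ => 1 / (n : ℝ) ^ (2 * k + 1) * Real.sin (2 * π * n * x)
      + Real.sin θ * (1 / (n : ℝ) ^ 2)) (S + Real.sin θ * (π ^ 2 / 6)) :=
    hS.add (hasSum_zeta_two.mul_left _)
  have hgnonneg : ∀ n : ℕ, n ≠ 1 →
      0 ≤ 1 / (n : ℝ) ^ (2 * k + 1) * Real.sin (2 * π * n * x)
        + Real.sin θ * (1 / (n : ℝ) ^ 2) := by
    intro n _
    rcases Nat.eq_zero_or_pos n with rfl | hn
    · simp
    have hn1 : (1 : ℝ) ≤ (n : ℝ) := by exact_mod_cast hn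
    have habs : |Real.sin ((n : ℝ) * θ)| ≤ n * Real.sin θ :=
      abs_sin_nat_mul_le θ hθ0.le hθπ.le n
    have heq : 2 * π * n * x = (n : ℝ) * θ := by rw [hθ]; ring
    rw [heq]
    have hpow : (n : ℝ) ^ 3 ≤ (n : ℝ) ^ (2 * k + 1) :=
      pow_le_pow_right₀ hn1 (by omega)
    have h3 : (0:ℝ) < (n : ℝ) ^ 3 := by positivity
    have hb : 1 / (n : ℝ) ^ (2 * k + 1) * |Real.sin ((n : ℝ) * θ)| ≤ Real.sin θ * (1 / (n:ℝ)^2) := by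
      calc 1 / (n : ℝ) ^ (2 * k + 1) * |Real.sin ((n : ℝ) * θ)|
          ≤ 1 / (n : ℝ) ^ 3 * (n * Real.sin θ) := by
            apply mul_le_mul _ habs (abs_nonneg _) (by positivity)
            exact one_div_le_one_div_of_le h3 hpow
        _ = Real.sin θ * (1 / (n:ℝ)^2) := by
            field_simp
    have := neg_abs_le (Real.sin ((n : ℝ) * θ))
    have h0 : (0:ℝ) ≤ 1 / (n : ℝ) ^ (2 * k + 1) := by positivity
    nlinarith [abs_nonneg (Real.sin ((n : ℝ) * θ))]
  have hle := le_hasSum hg 1 hgnonneg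
  simp only [Nat.cast_one, one_pow, mul_one, div_one] at hle
  have hπ2 : π ^ 2 < 12 := by nlinarith [Real.pi_lt_d2]
  nlinarith


/-- For a positive integer `k`: `(-1)^(k-1) B_{2k+1}(x) > 0` for `0 < x < 1/2`, and
`(-1)^(k-1) B_{2k+1}(x) < 0` for `1/2 < x < 1`. -/
theorem bernoulli_odd_sign (k : ℕ) (hk : 0 < k) :
    (∀ x : ℝ, 0 < x → x < 1 / 2 → 0 < (-1 : ℝ) ^ (k - 1) * bernoulliPoly (2 * k + 1) x) ∧
      (∀ x : ℝ, 1 / 2 < x → x < 1 → (-1 : ℝ) ^ (k - 1) * bernoulliPoly (2 * k + 1) x < 0) := by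
  have hπ := Real.pi_pos
  set c : ℝ := (2 * π) ^ (2 * k + 1) / 2 / ((2 * k + 1).factorial : ℝ) with hc
  have hcpos : 0 < c := by
    rw [hc]
    have : (0:ℝ) < ((2 * k + 1).factorial : ℝ) := by positivity
    positivity
  have hε : ((-1 : ℝ)) ^ (k + 1) = (-1 : ℝ) ^ (k - 1) := by
    obtain ⟨m, rfl⟩ := Nat.exists_eq_add_of_le hk
    simp [pow_add, pow_succ]
  have hP : ∀ x : ℝ, bernoulliPoly (2 * k + 1) x
      = (Polynomial.map (algebraMap ℚ ℝ) (Polynomial.bernoulli (2 * k + 1))).eval x := by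
    intro x
    rw [bernoulliPoly, Polynomial.aeval_def, Polynomial.eval_map]
  constructor
  · intro x hx0 hx2
    have key := key_pos k hk x hx0 hx2
    rw [← hP] at key
    rw [hε] at key
    have key' : 0 < c * ((-1 : ℝ) ^ (k - 1) * bernoulliPoly (2 * k + 1) x) := by
      have h2 : c * ((-1 : ℝ) ^ (k - 1) * bernoulliPoly (2 * k + 1) x)
          = (-1 : ℝ) ^ (k - 1) * (2 * π) ^ (2 * k + 1) / 2 / ((2 * k + 1).factorial : ℝ)
            * bernoulliPoly (2 * k + 1) x := by rw [hc]; ring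
      rw [h2]; exact key
    nlinarith
  · intro x hx2 hx1
    set y : ℝ := 1 - x with hy
    have hy0 : 0 < y := by rw [hy]; linarith
    have hy2 : y < 1 / 2 := by rw [hy]; linarith
    have hx01 : x ∈ Icc (0 : ℝ) 1 := ⟨by linarith, hx1.le⟩
    have hy01 : y ∈ Icc (0 : ℝ) 1 := ⟨hy0.le, by linarith⟩
    have hSx := hasSum_one_div_nat_pow_mul_sin (k := k) hk.ne' hx01
    have hSy := hasSum_one_div_nat_pow_mul_sin (k := k) hk.ne' hy01
    have hfun : (fun n : ℕ => 1 / (n : ℝ) ^ (2 * k + 1) * Real.sin (2 * π * n * x))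
        = fun n : ℕ => -(1 / (n : ℝ) ^ (2 * k + 1) * Real.sin (2 * π * n * y)) := by
      funext n
      have h1 : 2 * π * n * x = n * (2 * π) - 2 * π * n * y := by rw [hy]; ring
      rw [h1, Real.sin_nat_mul_two_pi_sub]
      ring
    rw [hfun] at hSx
    have heq := hSx.unique hSy.neg
    have key := key_pos k hk y hy0 hy2
    have keyx : (-1 : ℝ) ^ (k + 1) * (2 * π) ^ (2 * k + 1) / 2 / ((2 * k + 1).factorial : ℝ) *
        (Polynomial.map (algebraMap ℚ ℝ) (Polynomial.bernoulli (2 * k + 1))).eval x < 0 := by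
      linarith [heq, key]
    rw [← hP, hε] at keyx
    have key' : c * ((-1 : ℝ) ^ (k - 1) * bernoulliPoly (2 * k + 1) x) < 0 := by
      have h2 : c * ((-1 : ℝ) ^ (k - 1) * bernoulliPoly (2 * k + 1) x)
          = (-1 : ℝ) ^ (k - 1) * (2 * π) ^ (2 * k + 1) / 2 / ((2 * k + 1).factorial : ℝ)
            * bernoulliPoly (2 * k + 1) x := by rw [hc]; ring
      rw [h2]; exact keyx
    nlinarith
end

section
/- Let b₄⁺ ∈ [1/2, 1) be the root of the fourth Bernoulli polynomial B₄ in that interval, and suppose 1/2 ≤ a ≤ b₄⁺. Then ζ(σ, a) < 0 for every real σ with −4 < σ < −3. -/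
open HurwitzZeta Polynomial Set

section Helpers

open Real

lemma l_log_le_half {x : ℝ} (hx : 1 ≤ x) : Real.log x ≤ x / 2 := by
  have h0 : (0:ℝ) < x := by linarith
  have h1 : Real.log (Real.sqrt x) ≤ Real.sqrt x - 1 :=
    Real.log_le_sub_one_of_pos (Real.sqrt_pos.2 h0)
  have h2 : Real.log (Real.sqrt x) = Real.log x / 2 := Real.log_sqrt h0.le
  have h3 : Real.sqrt x ^ 2 = x := Real.sq_sqrt h0.le
  nlinarith [sq_nonneg (Real.sqrt x - 2)]

lemma l_abs_sin_nat_mul (n : ℕ) (x : ℝ) : |Real.sin (n * x)| ≤ n * |Real.sin x| := by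
  induction n with
  | zero => simp
  | succ n ih =>
    have h : ((n:ℝ)+1) * x = n * x + x := by ring
    rw [Nat.cast_succ, h, Real.sin_add]
    calc |Real.sin (n*x) * Real.cos x + Real.cos (n*x) * Real.sin x|
        ≤ |Real.sin (n*x) * Real.cos x| + |Real.cos (n*x) * Real.sin x| := abs_add_le _ _
      _ ≤ |Real.sin (n*x)| * 1 + 1 * |Real.sin x| := by
          rw [abs_mul, abs_mul]
          gcongr <;> first | exact Real.abs_cos_le_one _ | exact Real.abs_sin_le_one _
      _ ≤ n * |Real.sin x| + 1 * |Real.sin x| := by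
          simp only [mul_one, one_mul]; linarith
      _ = ((n:ℝ)+1) * |Real.sin x| := by ring

lemma l_abs_cos_nat_pi (n : ℕ) : |Real.cos (n * π)| = 1 := by
  induction n with
  | zero => simp
  | succ n ih =>
    have h : ((n:ℝ)+1) * π = n * π + π := by ring
    rw [Nat.cast_succ, h, Real.cos_add_pi, abs_neg, ih]

lemma l_sin_shift (m : ℕ) (φ : ℝ) : |Real.sin (m * (π + φ))| = |Real.sin (m * φ)| := by
  have h : (m:ℝ) * (π + φ) = m * φ + m * π := by ring
  rw [h, Real.sin_add, Real.sin_nat_mul_pi, mul_zero, add_zero, abs_mul, l_abs_cos_nat_pi,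
    mul_one]

lemma l_telescope (K : ℝ) (hK : 0 ≤ K) (N : ℕ) :
    ∑ i ∈ Finset.range N, K / ((i:ℝ)+2)^3 ≤ K/4 := by
  set f : ℕ → ℝ := fun i => K/(2*((i:ℝ)+1)*((i:ℝ)+2)) with hf
  have step : ∀ i : ℕ, K / ((i:ℝ)+2)^3 ≤ f i - f (i+1) := by
    intro i
    have h1 : (0:ℝ) < (i:ℝ)+1 := by positivity
    have h2 : (0:ℝ) < (i:ℝ)+2 := by positivity
    have h3 : (0:ℝ) < (i:ℝ)+3 := by positivity
    have : f i - f (i+1) = K/(2*((i:ℝ)+1)*((i:ℝ)+2)) - K/(2*((i:ℝ)+2)*((i:ℝ)+3)) := by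
      rw [hf]; push_cast; ring
    rw [this, div_sub_div _ _ (by positivity) (by positivity),
      div_le_div_iff₀ (by positivity) (by positivity)]
    nlinarith [mul_nonneg (mul_nonneg hK h1.le) (mul_nonneg h2.le h3.le), sq_nonneg ((i:ℝ)+2),
      mul_nonneg hK (mul_nonneg h1.le (mul_nonneg h2.le h3.le))]
  calc ∑ i ∈ Finset.range N, K / ((i:ℝ)+2)^3
      ≤ ∑ i ∈ Finset.range N, (f i - f (i+1)) := Finset.sum_le_sum fun i _ => step i
    _ = f 0 - f N := Finset.sum_range_sub' f N
    _ ≤ K/4 := by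
        have h4 : 0 ≤ f N := by rw [hf]; positivity
        have h5 : f 0 = K/4 := by rw [hf]; norm_num
        linarith

lemma l_hasSum_le {g : ℕ → ℝ} {T K : ℝ} (hG : HasSum g T)
    (hg : ∀ n : ℕ, |g n| ≤ K / ((n:ℝ)+2)^3) : T ≤ K/4 := by
  have hK : 0 ≤ K := by
    have h := (abs_nonneg (g 0)).trans (hg 0)
    nlinarith
  have hb : Summable (fun n : ℕ => K / ((n:ℝ)+2)^3) := by
    have h1 : Summable (fun n : ℕ => 1 / ((n:ℝ))^3) := by
      rw [summable_one_div_nat_pow]; norm_num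
    have h2 : Summable (fun n : ℕ => 1 / (((n+2:ℕ)):ℝ)^3) :=
      (summable_nat_add_iff (f := fun n : ℕ => 1/(n:ℝ)^3) 2).2 h1
    have h3 : Summable (fun n : ℕ => 1 / ((n:ℝ)+2)^3) :=
      h2.congr fun n => by push_cast; ring
    simpa [div_eq_mul_inv] using h3.mul_left K
  rw [← hG.tsum_eq]
  calc ∑' n, g n ≤ ∑' n : ℕ, K / ((n:ℝ)+2)^3 :=
        Summable.tsum_le_tsum (fun n => (le_abs_self _).trans (hg n)) hG.summable hb
    _ ≤ K/4 := hb.tsum_le_of_sum_range_le (l_telescope K hK)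

lemma l_S_bound {a t S : ℝ} (ha1 : 1/2 ≤ a) (ha2 : a ≤ 1) (ht1 : 4 ≤ t)
    (hS : HasSum (fun n : ℕ => Real.sin (2*π*a*(n:ℝ)) / (n:ℝ)^t) S) :
    S ≤ -(3/4) * Real.sin (2*π*a - π) := by
  have hpi := Real.pi_pos
  set φ := 2*π*a - π with hφ
  have hφ0 : 0 ≤ φ := by rw [hφ]; nlinarith
  have hφπ : φ ≤ π := by rw [hφ]; nlinarith
  have hsin0 : 0 ≤ Real.sin φ := Real.sin_nonneg_of_nonneg_of_le_pi hφ0 hφπ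
  set F : ℕ → ℝ := fun n => Real.sin (2*π*a*(n:ℝ)) / (n:ℝ)^t with hF
  have hF0 : F 0 = 0 := by simp [hF]
  have hF1 : F 1 = -Real.sin φ := by
    have h1 : 2*π*a = φ + π := by rw [hφ]; ring
    simp only [hF, Nat.cast_one, mul_one, Real.one_rpow, div_one, h1, Real.sin_add_pi]
  have hsum2 : ∑ i ∈ Finset.range 2, F i = -Real.sin φ := by
    rw [Finset.sum_range_succ, Finset.sum_range_one, hF0, hF1, zero_add]
  have hshift : HasSum (fun n : ℕ => F (n+2)) (S + Real.sin φ) := by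
    refine (hasSum_nat_add_iff (f := F) 2).mpr ?_
    rw [hsum2, add_neg_cancel_right]
    exact hS
  have hbound : ∀ n : ℕ, |F (n+2)| ≤ Real.sin φ / ((n:ℝ)+2)^3 := by
    intro n
    have hn0 : (0:ℝ) ≤ (n:ℝ) := Nat.cast_nonneg n
    have hm1 : (1:ℝ) ≤ (n:ℝ)+2 := by linarith
    have hm0 : (0:ℝ) < (n:ℝ)+2 := by linarith
    have hrw : F (n+2) = Real.sin (2*π*a*((n:ℝ)+2)) / ((n:ℝ)+2)^t := by
      simp only [hF]; push_cast; ring_nf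
    have harg : 2*π*a*((n:ℝ)+2) = ((n+2:ℕ):ℝ) * (π + φ) := by rw [hφ]; push_cast; ring
    have hnum : |Real.sin (2*π*a*((n:ℝ)+2))| ≤ ((n:ℝ)+2) * Real.sin φ := by
      rw [harg, l_sin_shift]
      calc |Real.sin (((n+2:ℕ):ℝ) * φ)| ≤ ((n+2:ℕ):ℝ) * |Real.sin φ| := l_abs_sin_nat_mul _ _
        _ = ((n:ℝ)+2) * Real.sin φ := by rw [abs_of_nonneg hsin0]; push_cast; ring
    have hpow : ((n:ℝ)+2)^(4:ℕ) ≤ ((n:ℝ)+2)^t := by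
      calc ((n:ℝ)+2)^(4:ℕ) = ((n:ℝ)+2)^((4:ℕ):ℝ) := (Real.rpow_natCast _ 4).symm
        _ ≤ ((n:ℝ)+2)^t := Real.rpow_le_rpow_of_exponent_le hm1 (by exact_mod_cast ht1)
    have hpow0 : (0:ℝ) < ((n:ℝ)+2)^t := Real.rpow_pos_of_pos hm0 t
    rw [hrw, abs_div, abs_of_pos hpow0]
    calc |Real.sin (2*π*a*((n:ℝ)+2))| / ((n:ℝ)+2)^t
        ≤ (((n:ℝ)+2) * Real.sin φ) / ((n:ℝ)+2)^(4:ℕ) :=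
          div_le_div₀ (by positivity) hnum (by positivity) hpow
      _ = Real.sin φ / ((n:ℝ)+2)^3 := by field_simp
  have := l_hasSum_le hshift hbound
  linarith

lemma l_C_bound {a t C4 Ct : ℝ} (ht1 : 4 < t)
    (h4 : HasSum (fun n : ℕ => Real.cos (2*π*a*(n:ℝ)) / (n:ℝ)^(4:ℝ)) C4)
    (ht : HasSum (fun n : ℕ => Real.cos (2*π*a*(n:ℝ)) / (n:ℝ)^t) Ct) :
    Ct ≤ C4 + (t-4)/8 := by
  set y := t - 4 with hy
  have hy0 : 0 < y := by rw [hy]; linarith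
  set g : ℕ → ℝ := fun n => Real.cos (2*π*a*(n:ℝ)) / (n:ℝ)^t
    - Real.cos (2*π*a*(n:ℝ)) / (n:ℝ)^(4:ℝ) with hg
  have hG : HasSum g (Ct - C4) := ht.sub h4
  have hg0 : g 0 = 0 := by
    simp only [hg, Nat.cast_zero]
    rw [Real.zero_rpow (by linarith), Real.zero_rpow (by norm_num)]
    simp
  have hg1 : g 1 = 0 := by
    simp only [hg, Nat.cast_one, Real.one_rpow, mul_one]
    ring
  have hsum2 : ∑ i ∈ Finset.range 2, g i = 0 := by
    rw [Finset.sum_range_succ, Finset.sum_range_one, hg0, hg1, zero_add]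
  have hshift : HasSum (fun n : ℕ => g (n+2)) (Ct - C4) := by
    refine (hasSum_nat_add_iff (f := g) 2).mpr ?_
    rw [hsum2, add_zero]
    exact hG
  have hbound : ∀ n : ℕ, |g (n+2)| ≤ (y/2) / ((n:ℝ)+2)^3 := by
    intro n
    have hn0 : (0:ℝ) ≤ (n:ℝ) := Nat.cast_nonneg n
    set m : ℝ := (n:ℝ)+2 with hmdef
    have hm1 : (1:ℝ) ≤ m := by rw [hmdef]; linarith
    have hm0 : (0:ℝ) < m := by linarith
    have hlog0 : 0 ≤ Real.log m := Real.log_nonneg hm1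
    have hA0 : (0:ℝ) < m^(4:ℝ) := Real.rpow_pos_of_pos hm0 _
    have ht0 : (0:ℝ) < m^t := Real.rpow_pos_of_pos hm0 _
    have hsplit : m^t = m^(4:ℝ) * m^y := by
      rw [← Real.rpow_add hm0]; congr 1; rw [hy]; ring
    have hexp : 1 - Real.exp (-(Real.log m * y)) ≤ Real.log m * y := by
      have := Real.add_one_le_exp (-(Real.log m * y))
      linarith
    have hinv : 1/m^(4:ℝ) - 1/m^t ≤ (Real.log m * y) / m^(4:ℝ) := by
      have hinvB : 1/m^y = Real.exp (-(Real.log m * y)) := by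
        rw [Real.rpow_def_of_pos hm0, one_div, ← Real.exp_neg]
      have key : 1/m^t = (1/m^(4:ℝ)) * Real.exp (-(Real.log m * y)) := by
        rw [hsplit, ← hinvB]
        field_simp
      rw [key]
      calc 1/m^(4:ℝ) - (1/m^(4:ℝ)) * Real.exp (-(Real.log m * y))
          = (1/m^(4:ℝ)) * (1 - Real.exp (-(Real.log m * y))) := by ring
        _ ≤ (1/m^(4:ℝ)) * (Real.log m * y) := mul_le_mul_of_nonneg_left hexp (by positivity)
        _ = (Real.log m * y) / m^(4:ℝ) := by ring
    have hlog : Real.log m ≤ m/2 := l_log_le_half hm1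
    have hpow4 : m^(4:ℝ) = m^(4:ℕ) := by
      rw [show (4:ℝ) = ((4:ℕ):ℝ) by norm_num, Real.rpow_natCast]
    have hfinal : 1/m^(4:ℝ) - 1/m^t ≤ (y/2) / m^3 := by
      have h5 : (Real.log m * y) / m^(4:ℝ) ≤ ((m/2) * y) / m^(4:ℝ) := by
        gcongr
      have h6 : ((m/2) * y) / m^(4:ℝ) = (y/2) / m^3 := by
        rw [hpow4]
        field_simp
      linarith [hinv]
    have hle : 1/m^t ≤ 1/m^(4:ℝ) := by
      apply one_div_le_one_div_of_le hA0
      exact Real.rpow_le_rpow_of_exponent_le hm1 (by linarith)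
    have hrw : g (n+2) = Real.cos (2*π*a*m) * (1/m^t - 1/m^(4:ℝ)) := by
      simp only [hg, hmdef]
      push_cast
      ring_nf
    rw [hrw, abs_mul]
    have h3 : |1/m^t - 1/m^(4:ℝ)| = 1/m^(4:ℝ) - 1/m^t := by
      rw [abs_of_nonpos (by linarith)]; ring
    rw [h3]
    calc |Real.cos (2*π*a*m)| * (1/m^(4:ℝ) - 1/m^t)
        ≤ 1 * (1/m^(4:ℝ) - 1/m^t) :=
          mul_le_mul_of_nonneg_right (Real.abs_cos_le_one _) (by linarith)
      _ = 1/m^(4:ℝ) - 1/m^t := one_mul _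
      _ ≤ (y/2) / m^3 := hfinal
  have := l_hasSum_le hshift hbound
  linarith

lemma bernoulliPoly_four (x : ℝ) : bernoulliPoly 4 x = x^2*(x-1)^2 - 1/30 := by
  have bern4 : _root_.bernoulli 4 = -1/30 := by
    rw [bernoulli_eq_bernoulli'_of_ne_one (by norm_num), bernoulli'_four]
  have bern2 : _root_.bernoulli 2 = 1/6 := by
    rw [bernoulli_eq_bernoulli'_of_ne_one (by norm_num), bernoulli'_two]
  have bern3 : _root_.bernoulli 3 = 0 := by
    rw [bernoulli_eq_bernoulli'_of_ne_one (by norm_num), bernoulli'_three]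
  simp [bernoulliPoly, Polynomial.bernoulli, Finset.sum_range_succ, _root_.bernoulli_zero,
    _root_.bernoulli_one, bern2, bern3, bern4, Polynomial.aeval_monomial]
  norm_num [Nat.choose]
  ring

lemma bp_eq (x : ℝ) :
    (Polynomial.map (algebraMap ℚ ℝ) (Polynomial.bernoulli 4)).eval x = bernoulliPoly 4 x := by
  rw [Polynomial.eval_map, bernoulliPoly, Polynomial.aeval_def]

lemma l_combine1 {P Q Ct St : ℝ} (h1 : P*Ct < 0) (hQ : 0 < Q) (hSt : St ≤ 0) :
    P*Ct + Q*St < 0 := by nlinarith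

lemma l_combine2 {P Q Ct St y : ℝ} (h7 : P*Ct ≤ y/8) (h8 : Q*St ≤ y*(-(3/8:ℝ)))
    (hy : 0 < y) : P*Ct + Q*St < 0 := by nlinarith

lemma l_pmul {P Ct y : ℝ} (hP0 : 0 < P) (hP1 : P ≤ 1) (hCt : Ct ≤ y/8) (hy : 0 ≤ y) :
    P*Ct ≤ y/8 := by
  rcases le_or_gt Ct 0 with h | h
  · nlinarith
  · nlinarith

lemma l_pi4 : (97:ℝ) < Real.pi^4 := by
  have h := Real.pi_gt_d6
  have h1 : (3.14:ℝ) < π := by linarith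
  have h2 : (9.85:ℝ) < π^2 := by nlinarith
  nlinarith

lemma l_pisq : Real.pi^2 < 9.9225 := by
  have h := Real.pi_lt_d2
  have h0 := Real.pi_pos
  nlinarith

lemma l_U {B : ℝ} (hB : 1/250 < B) : (1:ℝ)/8 < (2*π)^4/48 * B := by
  have hpi4 : (97:ℝ) < π^4 := l_pi4
  have h1 : π^4 * (1/250) < π^4 * B := mul_lt_mul_of_pos_left hB (by positivity)
  nlinarith

lemma l_sin_lb {a : ℝ} (h1 : 0.735 < a) (h2 : a < 0.76) :
    (1:ℝ)/2 ≤ Real.sin (2*π*a - π) := by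
  have hpi := Real.pi_pos
  have he : Real.sin (2*π*a - π) = Real.cos (π/2 - (2*π*a - π)) :=
    (Real.cos_pi_div_two_sub _).symm
  have h2' : 1 - (π/2 - (2*π*a - π))^2/2 ≤ Real.cos (π/2 - (2*π*a - π)) :=
    Real.one_sub_sq_div_two_le_cos
  have h3 : π/2 - (2*π*a - π) = π*(3/2 - 2*a) := by ring
  have hu2 : (3/2 - 2*a)^2 ≤ 0.0009 := by nlinarith
  have hpisq : π^2 < 9.9225 := l_pisq
  have h4 : (π/2 - (2*π*a - π))^2 ≤ 0.01 := by
    rw [h3]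
    have h5 : (π*(3/2-2*a))^2 = π^2 * (3/2-2*a)^2 := by ring
    rw [h5]
    nlinarith [mul_le_mul hpisq.le hu2 (sq_nonneg _) (by positivity : (0:ℝ) ≤ 9.9225)]
  linarith

lemma l_main_real {a t C4 Ct St : ℝ} (ha1 : 1/2 ≤ a) (ha2 : a < 0.76)
    (ht1 : 4 < t) (ht2 : t < 5)
    (hC4 : C4 = -((2*π)^4/48) * (a^2*(a-1)^2 - 1/30))
    (hB0 : 0 ≤ a^2*(a-1)^2 - 1/30)
    (hcase : 1/250 < a^2*(a-1)^2 - 1/30 ∨ 0.735 < a)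
    (hCt : Ct ≤ C4 + (t-4)/8)
    (hSt : St ≤ -(3/4) * Real.sin (2*π*a - π)) :
    Real.cos (π*t/2) * Ct + Real.sin (π*t/2) * St < 0 := by
  have hpi := Real.pi_pos
  set y := t - 4 with hy
  have hy0 : 0 < y := by rw [hy]; linarith
  have hy1 : y < 1 := by rw [hy]; linarith
  have hargeq : π*t/2 = π*y/2 + 2*π := by rw [hy]; ring
  have hcos_eq : Real.cos (π*t/2) = Real.cos (π*y/2) := by
    rw [hargeq, Real.cos_add_two_pi]
  have hsin_eq : Real.sin (π*t/2) = Real.sin (π*y/2) := by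
    rw [hargeq, Real.sin_add_two_pi]
  rw [hcos_eq, hsin_eq]
  set P := Real.cos (π*y/2) with hP
  set Q := Real.sin (π*y/2) with hQ
  have hP1 : P ≤ 1 := Real.cos_le_one _
  have hP0 : 0 < P := by
    apply Real.cos_pos_of_mem_Ioo
    constructor <;> nlinarith
  have hQy : y ≤ Q := by
    have h := Real.mul_le_sin (x := π*y/2) (by positivity) (by nlinarith)
    calc y = 2/π * (π*y/2) := by field_simp
      _ ≤ Q := h
  have hQ0 : 0 < Q := lt_of_lt_of_le hy0 hQy
  set φ := 2*π*a - π with hφ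
  have hφ0 : 0 ≤ φ := by rw [hφ]; nlinarith
  have hφπ : φ ≤ π := by rw [hφ]; nlinarith
  have hsφ0 : 0 ≤ Real.sin φ := Real.sin_nonneg_of_nonneg_of_le_pi hφ0 hφπ
  have hSt0 : St ≤ 0 := by linarith
  have hXeq : C4 = -((2*π)^4/48 * (a^2*(a-1)^2 - 1/30)) := by rw [hC4]; ring
  have hX0 : 0 ≤ (2*π)^4/48 * (a^2*(a-1)^2 - 1/30) :=
    mul_nonneg (by positivity) hB0
  rcases hcase with hc1 | hc2
  · have hU : (1:ℝ)/8 < (2*π)^4/48 * (a^2*(a-1)^2 - 1/30) := l_U hc1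
    have hCt0 : Ct < 0 := by
      rw [hXeq] at hCt
      linarith
    exact l_combine1 (mul_neg_of_pos_of_neg hP0 hCt0) hQ0 hSt0
  · have hsφ : (1:ℝ)/2 ≤ Real.sin φ := by rw [hφ]; exact l_sin_lb hc2 ha2
    have hStq : St ≤ -(3/8 : ℝ) := by linarith
    have hCty : Ct ≤ y/8 := by
      rw [hXeq] at hCt
      linarith
    have h7 : P * Ct ≤ y/8 := l_pmul hP0 hP1 hCty hy0.le
    have h8 : Q * St ≤ y * (-(3/8:ℝ)) := by
      have hq1 : Q * St ≤ y * St := mul_le_mul_of_nonpos_right hQy hSt0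
      have hq2 : y * St ≤ y * (-(3/8:ℝ)) := mul_le_mul_of_nonneg_left hStq hy0.le
      exact hq1.trans hq2
    exact l_combine2 h7 h8 hy0

end Helpers

section ComplexSide

open Complex

lemma l_ofReal_sum_extract {F : ℕ → ℝ} {c : ℂ}
    (h : HasSum (fun n : ℕ => ((F n : ℝ) : ℂ)) c) :
    HasSum F c.re ∧ c = (c.re : ℂ) := by
  rw [Complex.hasSum_iff] at h
  obtain ⟨hre, him⟩ := h
  simp only [Complex.ofReal_re, Complex.ofReal_im] at hre him
  have him0 : c.im = 0 := him.unique hasSum_zero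
  exact ⟨hre, Complex.ext (by simp) (by simp [him0])⟩

lemma l_cosZeta_real (a : ℝ) {t : ℝ} (ht : 1 < t) :
    HasSum (fun n : ℕ => Real.cos (2*Real.pi*a*(n:ℝ)) / (n:ℝ)^t)
      ((cosZeta (a : UnitAddCircle) (t : ℂ)).re) ∧
    cosZeta (a : UnitAddCircle) (t : ℂ) = (((cosZeta (a : UnitAddCircle) (t : ℂ)).re : ℝ) : ℂ) := by
  have hre : 1 < ((t:ℂ)).re := by simpa using ht
  have h := hasSum_nat_cosZeta a hre
  have h2 : HasSum (fun n : ℕ => ((Real.cos (2*Real.pi*a*(n:ℝ)) / (n:ℝ)^t : ℝ) : ℂ))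
      (cosZeta (a : UnitAddCircle) (t : ℂ)) := by
    refine h.congr_fun fun n => ?_
    rw [Complex.ofReal_div, Complex.ofReal_cpow (Nat.cast_nonneg n)]
    norm_num
  exact l_ofReal_sum_extract h2

lemma l_sinZeta_real (a : ℝ) {t : ℝ} (ht : 1 < t) :
    HasSum (fun n : ℕ => Real.sin (2*Real.pi*a*(n:ℝ)) / (n:ℝ)^t)
      ((sinZeta (a : UnitAddCircle) (t : ℂ)).re) ∧
    sinZeta (a : UnitAddCircle) (t : ℂ) = (((sinZeta (a : UnitAddCircle) (t : ℂ)).re : ℝ) : ℂ) := by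
  have hre : 1 < ((t:ℂ)).re := by simpa using ht
  have h := hasSum_nat_sinZeta a hre
  have h2 : HasSum (fun n : ℕ => ((Real.sin (2*Real.pi*a*(n:ℝ)) / (n:ℝ)^t : ℝ) : ℂ))
      (sinZeta (a : UnitAddCircle) (t : ℂ)) := by
    refine h.congr_fun fun n => ?_
    rw [Complex.ofReal_div, Complex.ofReal_cpow (Nat.cast_nonneg n)]
    norm_num
  exact l_ofReal_sum_extract h2

lemma l_fe (a : ℝ) {t : ℝ} (ht : 1 < t) {C S : ℝ}
    (hcz : cosZeta (a : UnitAddCircle) (t : ℂ) = (C : ℂ))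
    (hsz : sinZeta (a : UnitAddCircle) (t : ℂ) = (S : ℂ)) :
    hurwitzZeta (a : UnitAddCircle) ((1:ℂ) - (t:ℂ)) =
      ((2 * (2*Real.pi)^(-t) * Real.Gamma t *
        (Real.cos (Real.pi*t/2) * C + Real.sin (Real.pi*t/2) * S) : ℝ) : ℂ) := by
  have hpi := Real.pi_pos
  have ht0 : (0:ℝ) < t := by linarith
  have hn : ∀ n : ℕ, (t:ℂ) ≠ -(n:ℂ) := by
    intro n h
    have h2 : t = -(n:ℝ) := by exact_mod_cast congrArg Complex.re h
    have : (0:ℝ) ≤ (n:ℝ) := Nat.cast_nonneg n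
    linarith
  have hn' : ∀ n : ℕ, (t:ℂ) ≠ -(n:ℕ) := by
    intro n; simpa using hn n
  have hs' : (a : UnitAddCircle) ≠ 0 ∨ (t:ℂ) ≠ 1 := by
    right
    intro h
    have : t = 1 := by exact_mod_cast congrArg Complex.re h
    linarith
  have heo : hurwitzZeta (a : UnitAddCircle) ((1:ℂ) - (t:ℂ))
      = hurwitzZetaEven (a : UnitAddCircle) (1 - (t:ℂ))
        + hurwitzZetaOdd (a : UnitAddCircle) (1 - (t:ℂ)) := rfl
  rw [heo, hurwitzZetaEven_one_sub (a : UnitAddCircle) hn' hs',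
    hurwitzZetaOdd_one_sub (a : UnitAddCircle) hn', hcz, hsz]
  have hGamma : Complex.Gamma (t:ℂ) = ((Real.Gamma t : ℝ) : ℂ) := Complex.Gamma_ofReal t
  have hcpow : (2 * (Real.pi:ℂ)) ^ (-(t:ℂ)) = (((2*Real.pi)^(-t) : ℝ) : ℂ) := by
    rw [show (2 * (Real.pi:ℂ)) = (((2*Real.pi : ℝ)) : ℂ) by push_cast; ring,
      show (-(t:ℂ)) = (((-t : ℝ)) : ℂ) by push_cast; ring,
      ← Complex.ofReal_cpow (by positivity) (-t)]
  have hcos : Complex.cos ((Real.pi:ℂ) * (t:ℂ) / 2) = ((Real.cos (Real.pi*t/2) : ℝ) : ℂ) := by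
    rw [Complex.ofReal_cos]
    norm_num
  have hsin : Complex.sin ((Real.pi:ℂ) * (t:ℂ) / 2) = ((Real.sin (Real.pi*t/2) : ℝ) : ℂ) := by
    rw [Complex.ofReal_sin]
    norm_num
  rw [hGamma, hcpow, hcos, hsin]
  push_cast
  ring

end ComplexSide

/-- With `b₄⁺ ∈ [1/2,1)` the root of `B₄` in that interval and `1/2 ≤ a ≤ b₄⁺`,
`ζ(σ, a) < 0` for every real `σ ∈ (-4, -3)`. -/
theorem hurwitzZeta_neg_on_Ioo_neg_four_neg_three (bp : ℝ)
    (hbp : bp ∈ Set.Ico (1 / 2 : ℝ) 1) (hbp0 : bernoulliPoly 4 bp = 0)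
    (a : ℝ) (ha : 1 / 2 ≤ a) (ha' : a ≤ bp) :
    ∀ σ : ℝ, -4 < σ → σ < -3 →
      (hurwitzZeta (a : UnitAddCircle) (σ : ℂ)).im = 0 ∧
        (hurwitzZeta (a : UnitAddCircle) (σ : ℂ)).re < 0 := by
  intro σ h1 h2
  obtain ⟨hbp1, hbp2⟩ := hbp
  -- Bernoulli polynomial facts
  have hq2 : (bp*(1-bp))^2 = 1/30 := by
    have h := hbp0
    rw [bernoulliPoly_four] at h
    linear_combination h
  have hqnn : 0 ≤ bp*(1-bp) := mul_nonneg (by linarith) (by linarith)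
  have hbp76 : bp < 0.76 := by
    by_contra hcon
    push_neg at hcon
    have hh1 : bp*(1-bp) ≤ 0.1824 := by
      nlinarith [mul_nonneg (by linarith : (0:ℝ) ≤ bp - 0.76) (by linarith : (0:ℝ) ≤ bp - 0.24)]
    nlinarith [mul_le_mul hh1 hh1 hqnn (by norm_num : (0:ℝ) ≤ 0.1824)]
  have ha76 : a < 0.76 := lt_of_le_of_lt ha' hbp76
  have hann : 0 ≤ a*(1-a) := mul_nonneg (by linarith) (by linarith)
  have hB0 : 0 ≤ a^2*(a-1)^2 - 1/30 := by
    have hmono : bp*(1-bp) ≤ a*(1-a) := by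
      nlinarith [mul_nonneg (by linarith : (0:ℝ) ≤ bp - a) (by linarith : (0:ℝ) ≤ a + bp - 1)]
    nlinarith [mul_le_mul hmono hmono hqnn hann]
  have hcase : 1/250 < a^2*(a-1)^2 - 1/30 ∨ 0.735 < a := by
    rcases le_or_gt a 0.735 with h | h
    · left
      have hp1 : 0.194775 ≤ a*(1-a) := by
        nlinarith [mul_nonneg (by linarith : (0:ℝ) ≤ 0.735 - a) (by linarith : (0:ℝ) ≤ a - 0.265)]
      nlinarith [mul_le_mul hp1 hp1 (by norm_num : (0:ℝ) ≤ 0.194775) hann]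
    · right; exact h
  -- the shifted variable
  set t : ℝ := 1 - σ with hthd
  have ht1 : 4 < t := by rw [hthd]; linarith
  have ht2 : t < 5 := by rw [hthd]; linarith
  have htgt1 : (1:ℝ) < t := by linarith
  -- real series
  obtain ⟨hCsum, hCz⟩ := l_cosZeta_real a htgt1
  obtain ⟨hSsum, hSz⟩ := l_sinZeta_real a htgt1
  -- the value at exponent 4 via the Fourier expansion of B₄
  have hx : a ∈ Set.Icc (0:ℝ) 1 := ⟨by linarith, by linarith⟩
  have h4sum := hasSum_one_div_nat_pow_mul_cos (k := 2) two_ne_zero hx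
  have hfun : (fun n : ℕ => 1/(n:ℝ)^(2*2) * Real.cos (2*Real.pi*(n:ℝ)*a))
      = (fun n : ℕ => Real.cos (2*Real.pi*a*(n:ℝ)) / (n:ℝ)^((4:ℝ))) := by
    funext n
    have hp : ((n:ℝ))^((4:ℝ)) = ((n:ℝ))^((4:ℕ)) := by
      rw [show (4:ℝ) = ((4:ℕ):ℝ) by norm_num, Real.rpow_natCast]
    rw [hp, show 2*Real.pi*(n:ℝ)*a = 2*Real.pi*a*(n:ℝ) by ring,
      show (2*2 : ℕ) = (4:ℕ) by norm_num]
    ring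
  have hval : ((-1:ℝ)) ^ (2 + 1) * (2 * Real.pi) ^ (2 * 2) / 2 / (((2 * 2).factorial : ℕ) : ℝ) *
      (Polynomial.map (algebraMap ℚ ℝ) (Polynomial.bernoulli (2 * 2))).eval a
      = -((2*Real.pi)^4/48) * (a^2*(a-1)^2 - 1/30) := by
    rw [show (2*2 : ℕ) = (4:ℕ) by norm_num, bp_eq, bernoulliPoly_four]
    norm_num [Nat.factorial]
    ring
  rw [hfun, hval] at h4sum
  -- the two estimates
  have hCt := l_C_bound ht1 h4sum hCsum
  have hSt := l_S_bound ha (by linarith) (by linarith) hSsum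
  have hkey := l_main_real ha ha76 ht1 ht2 rfl hB0 hcase hCt hSt
  -- put everything together
  have hσ : (σ:ℂ) = (1:ℂ) - (t:ℂ) := by rw [hthd]; push_cast; ring
  have hfe := l_fe a htgt1 hCz hSz
  rw [hσ, hfe]
  refine ⟨Complex.ofReal_im _, ?_⟩
  rw [Complex.ofReal_re]
  have hpos : 0 < 2 * (2*Real.pi)^(-t) * Real.Gamma t :=
    mul_pos (mul_pos two_pos (Real.rpow_pos_of_pos (by positivity) _))
      (Real.Gamma_pos_of_pos (by linarith))
  exact mul_neg_of_pos_of_neg hpos hkey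
end

section
/- Let N ≥ 4 be an integer and 0 < a ≤ 1 with B_{N+1}(a)·B_{N+2}(a) < 0, where B_n denotes the n-th Bernoulli polynomial. Then the Hurwitz zeta function σ ↦ ζ(σ, a) has exactly one real zero in the open interval (−N−1, −N). -/
open HurwitzZeta Polynomial Set

open Complex LSeries
open scoped Real ComplexConjugate

namespace HZaux

noncomputable def Fa (a : ℝ) : ℕ → ℂ := (Complex.exp <| 2 * ↑π * Complex.I * ↑a * ·)

lemma norm_Fa (a : ℝ) (n : ℕ) : ‖Fa a n‖ = 1 := by
  have h : (2 * ↑π * Complex.I * ↑a * ↑n : ℂ) = ↑(2 * π * a * n : ℝ) * Complex.I := by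
    push_cast; ring
  rw [Fa, h, Complex.norm_exp_ofReal_mul_I]

lemma absc (a : ℝ) : abscissaOfAbsConv (Fa a) ≤ 1 :=
  abscissaOfAbsConv_le_of_le_const ⟨1, fun n _ => (norm_Fa a n).le⟩

lemma expZeta_eq_LSeries (a : ℝ) {s : ℂ} (hs : 1 < s.re) : LSeries (Fa a) s = expZeta ↑a s :=
  (LSeriesHasSum_exp a hs).LSeries_eq

lemma hasDerivAt_Z (a : ℝ) {t : ℝ} (ht : 1 < t) :
    HasDerivAt (fun u : ℝ => expZeta ↑a ↑u) (-LSeries (logMul (Fa a)) ↑t) t := by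
  have h0 : abscissaOfAbsConv (Fa a) < ((t : ℂ)).re := by
    refine lt_of_le_of_lt (absc a) ?_
    rw [Complex.ofReal_re]
    exact_mod_cast ht
  have h1 := LSeries_hasDerivAt h0
  have h2 : HasDerivAt (expZeta ↑a) (-LSeries (logMul (Fa a)) ↑t) ↑t := by
    refine h1.congr_of_eventuallyEq ?_
    have ho : IsOpen {s : ℂ | 1 < s.re} := isOpen_lt continuous_const Complex.continuous_re
    filter_upwards [ho.mem_nhds (by simpa using ht)] with s hs
    exact (expZeta_eq_LSeries a hs).symm
  exact h2.comp_ofReal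

lemma hasSum_tele : HasSum (fun n : ℕ => (1 : ℝ) / ((n + 1) * (n + 2))) 1 := by
  have hnn : ∀ n : ℕ, 0 ≤ (1 : ℝ) / ((n + 1) * (n + 2)) := fun n => by positivity
  rw [hasSum_iff_tendsto_nat_of_nonneg hnn]
  have hsum : ∀ m : ℕ, ∑ n ∈ Finset.range m, (1 : ℝ) / ((n + 1) * (n + 2))
      = 1 - 1 / (m + 1) := by
    intro m
    have := Finset.sum_range_sub' (f := fun n : ℕ => (1 : ℝ) / (n + 1)) m
    simp only [Nat.cast_zero, zero_add, div_one] at this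
    rw [← this]
    refine Finset.sum_congr rfl fun n _ => ?_
    have h1 : ((n : ℝ) + 1) ≠ 0 := by positivity
    have h2 : ((n : ℝ) + 2) ≠ 0 := by positivity
    push_cast
    rw [div_sub_div _ _ h1 (by positivity : ((n : ℝ) + 1) + 1 ≠ 0)]
    norm_num
    ring_nf
    tauto
  simp only [hsum]
  have := tendsto_one_div_add_atTop_nhds_zero_nat (𝕜 := ℝ)
  have h2 : Filter.Tendsto (fun m : ℕ => 1 - 1 / ((m : ℝ) + 1)) Filter.atTop (nhds (1 - 0)) :=
    Filter.Tendsto.sub tendsto_const_nhds (by exact_mod_cast this)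
  simpa using h2

lemma tail_bound {g : ℕ → ℂ} {S : ℂ} {B : ℝ} (hg : HasSum g S)
    (hle : ∀ n : ℕ, ‖g (n + 2)‖ ≤ B * (1 / ((n + 1) * (n + 2)))) :
    ‖S - g 0 - g 1‖ ≤ B := by
  have h2 : HasSum (fun n => g (n + 2)) (S - (g 0 + g 1)) := by
    refine (hasSum_nat_add_iff 2).mpr ?_
    have : ∑ i ∈ Finset.range 2, g i = g 0 + g 1 := by
      simp [Finset.sum_range_succ]
    rw [this]
    simpa using hg
  have hmaj : HasSum (fun n : ℕ => B * (1 / ((n + 1) * (n + 2)))) (B * 1) :=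
    hasSum_tele.mul_left B
  have hsn : Summable fun n => ‖g (n + 2)‖ :=
    Summable.of_nonneg_of_le (fun _ => norm_nonneg _) hle hmaj.summable
  have hS : S - g 0 - g 1 = ∑' n, g (n + 2) := by
    rw [h2.tsum_eq]; ring
  calc ‖S - g 0 - g 1‖ = ‖∑' n, g (n + 2)‖ := by rw [hS]
    _ ≤ ∑' n, ‖g (n + 2)‖ := norm_tsum_le_tsum_norm hsn
    _ ≤ ∑' n : ℕ, B * (1 / ((n + 1) * (n + 2))) := Summable.tsum_le_tsum hle hsn hmaj.summable
    _ = B := by rw [hmaj.tsum_eq, mul_one]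


lemma rpow_big {x : ℝ} {t : ℝ} (hx : 2 ≤ x) (ht : 5 ≤ t) : x ^ (5 : ℕ) ≤ x ^ t := by
  rw [← Real.rpow_natCast x 5]
  exact Real.rpow_le_rpow_of_exponent_le (by linarith) (by push_cast; linarith)

lemma Z_sub_bound (a : ℝ) {t : ℝ} (ht : 5 ≤ t) :
    ‖expZeta ↑a ↑t - Complex.exp (2 * ↑π * Complex.I * ↑a)‖ ≤ 1 / 8 := by
  have ht1 : 1 < (↑t : ℂ).re := by rw [Complex.ofReal_re]; linarith
  have hg := hasSum_expZeta_of_one_lt_re a ht1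
  set g : ℕ → ℂ := fun n : ℕ => Complex.exp (2 * ↑π * Complex.I * ↑a * ↑n) / (n : ℂ) ^ (↑t : ℂ)
    with hgdef
  have htne : (↑t : ℂ) ≠ 0 := by
    simp only [ne_eq, Complex.ofReal_eq_zero]; linarith
  have hg0 : g 0 = 0 := by
    simp [hgdef, Complex.zero_cpow htne]
  have hg1 : g 1 = Complex.exp (2 * ↑π * Complex.I * ↑a) := by
    simp [hgdef]
  have hle : ∀ n : ℕ, ‖g (n + 2)‖ ≤ (1 / 8 : ℝ) * (1 / ((n + 1) * (n + 2))) := by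
    intro n
    have hx : (2 : ℝ) ≤ (n : ℝ) + 2 := by
      linarith [show (0:ℝ) ≤ (n:ℝ) from Nat.cast_nonneg n]
    have hnormexp : ‖Complex.exp (2 * ↑π * Complex.I * ↑a * ↑(n + 2))‖ = 1 := norm_Fa a (n + 2)
    have hnormden : ‖((n + 2 : ℕ) : ℂ) ^ (↑t : ℂ)‖ = ((n + 2 : ℕ) : ℝ) ^ t := by
      rw [norm_natCast_cpow_of_pos (by omega), Complex.ofReal_re]
    have hnorm : ‖g (n + 2)‖ = 1 / (((n : ℝ) + 2) ^ t) := by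
      rw [hgdef]
      simp only [norm_div]
      rw [show ((n + 2 : ℕ) : ℂ) = (((n : ℕ) + 2 : ℕ) : ℂ) by norm_cast] at *
      rw [hnormexp, hnormden]
      norm_num
    rw [hnorm]
    have h5 : ((n : ℝ) + 2) ^ (5 : ℕ) ≤ ((n : ℝ) + 2) ^ t := rpow_big hx ht
    have h8 : 8 * (((n : ℝ) + 1) * ((n : ℝ) + 2)) ≤ ((n : ℝ) + 2) ^ (5 : ℕ) := by
      have hn : (0 : ℝ) ≤ (n : ℝ) := Nat.cast_nonneg n
      nlinarith [sq_nonneg ((n : ℝ)), pow_nonneg hn 3, pow_nonneg hn 2]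
    rw [one_div_mul_one_div]
    apply one_div_le_one_div_of_le (by positivity)
    linarith
  have := tail_bound hg hle
  rw [hg0, hg1] at this
  simpa using this

lemma Z_norm_ge (a : ℝ) {t : ℝ} (ht : 5 ≤ t) : 7 / 8 ≤ ‖expZeta ↑a ↑t‖ := by
  have h1 : ‖Complex.exp (2 * ↑π * Complex.I * ↑a)‖ = 1 := by
    have h : (2 * ↑π * Complex.I * ↑a : ℂ) = ↑(2 * π * a : ℝ) * Complex.I := by push_cast; ring
    rw [h, Complex.norm_exp_ofReal_mul_I]
  have h2 := Z_sub_bound a ht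
  have h3 := abs_norm_sub_norm_le (expZeta ↑a ↑t) (Complex.exp (2 * ↑π * Complex.I * ↑a))
  rw [h1] at h3
  have := abs_le.mp h3
  linarith [this.1]

lemma deriv_bound (a : ℝ) {t : ℝ} (ht : 5 ≤ t) : ‖LSeries (logMul (Fa a)) ↑t‖ ≤ 1 / 4 := by
  have h0 : abscissaOfAbsConv (Fa a) < ((t : ℂ)).re := by
    refine lt_of_le_of_lt (absc a) ?_
    rw [Complex.ofReal_re]
    exact_mod_cast show (1:ℝ) < t by linarith
  have hsumm : LSeriesSummable (logMul (Fa a)) ↑t := LSeriesSummable_logMul_of_lt_re h0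
  have hg : HasSum (LSeries.term (logMul (Fa a)) ↑t) (LSeries (logMul (Fa a)) ↑t) := hsumm.hasSum
  have h00 : LSeries.term (logMul (Fa a)) ↑t 0 = 0 := LSeries.term_zero _ _
  have h11 : LSeries.term (logMul (Fa a)) ↑t 1 = 0 := by
    rw [LSeries.term_of_ne_zero one_ne_zero]
    simp [logMul]
  have hle : ∀ n : ℕ, ‖LSeries.term (logMul (Fa a)) ↑t (n + 2)‖
      ≤ (1 / 4 : ℝ) * (1 / ((n + 1) * (n + 2))) := by
    intro n
    rw [LSeries.term_of_ne_zero (by omega : n + 2 ≠ 0)]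
    have hx2 : (2 : ℝ) ≤ (n : ℝ) + 2 := by
      linarith [show (0:ℝ) ≤ (n:ℝ) from Nat.cast_nonneg n]
    have hxpos : (0 : ℝ) < (n : ℝ) + 2 := by positivity
    have hnormden : ‖((n + 2 : ℕ) : ℂ) ^ (↑t : ℂ)‖ = ((n : ℝ) + 2) ^ t := by
      rw [norm_natCast_cpow_of_pos (by omega), Complex.ofReal_re]; norm_num
    have hlog : ‖Complex.log ((n + 2 : ℕ) : ℂ)‖ = Real.log ((n : ℝ) + 2) := by
      rw [show ((n + 2 : ℕ) : ℂ) = ((((n : ℝ) + 2) : ℝ) : ℂ) by push_cast; ring,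
        ← Complex.ofReal_log (by positivity), Complex.norm_real]
      exact abs_of_nonneg (Real.log_nonneg (by linarith))
    have hnorm : ‖logMul (Fa a) (n + 2) / ((n + 2 : ℕ) : ℂ) ^ (↑t : ℂ)‖
        = Real.log ((n : ℝ) + 2) / ((n : ℝ) + 2) ^ t := by
      rw [norm_div, hnormden, logMul, norm_mul, hlog, norm_Fa a (n + 2), mul_one]
    rw [hnorm]
    have hlogle : Real.log ((n : ℝ) + 2) ≤ (n : ℝ) + 2 := by
      have := Real.log_le_sub_one_of_pos hxpos
      linarith
    have h5 : ((n : ℝ) + 2) ^ (5 : ℕ) ≤ ((n : ℝ) + 2) ^ t := rpow_big hx2 ht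
    have h8 : 4 * (((n : ℝ) + 2) * (((n : ℝ) + 1) * ((n : ℝ) + 2))) ≤ ((n : ℝ) + 2) ^ (5 : ℕ) := by
      have hn : (0 : ℝ) ≤ (n : ℝ) := Nat.cast_nonneg n
      nlinarith [sq_nonneg ((n : ℝ)), pow_nonneg hn 3, pow_nonneg hn 2]
    have hpowpos : (0 : ℝ) < ((n : ℝ) + 2) ^ t := Real.rpow_pos_of_pos hxpos t
    rw [one_div_mul_one_div, div_le_div_iff₀ hpowpos (by positivity)]
    nlinarith [h5, h8, mul_le_mul_of_nonneg_right hlogle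
      (show (0:ℝ) ≤ 4 * (((n : ℝ) + 1) * ((n : ℝ) + 2)) by positivity)]
  have := tail_bound hg hle
  rw [h00, h11] at this
  simpa using this


lemma cpow_natCast_real (n : ℕ) (t : ℝ) : ((n : ℂ)) ^ (↑t : ℂ) = ↑(((n : ℝ)) ^ t) := by
  rw [Complex.ofReal_cpow (Nat.cast_nonneg n)]
  norm_num

lemma expZeta_neg (a : ℝ) {t : ℝ} (ht : 1 < t) :
    expZeta (-↑a : UnitAddCircle) ↑t = conj (expZeta (↑a : UnitAddCircle) ↑t) := by
  have ht' : 1 < (↑t : ℂ).re := by rw [Complex.ofReal_re]; exact ht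
  have h1 := hasSum_expZeta_of_one_lt_re (-a) ht'
  have h2 := (hasSum_expZeta_of_one_lt_re a ht').star
  have key : ∀ n : ℕ, star (Complex.exp (2 * ↑π * Complex.I * ↑a * ↑n) / (n : ℂ) ^ (↑t : ℂ))
      = Complex.exp (2 * ↑π * Complex.I * ↑(-a : ℝ) * ↑n) / (n : ℂ) ^ (↑t : ℂ) := by
    intro n
    rw [star_div₀]
    congr 1
    · rw [show star (Complex.exp (2 * ↑π * Complex.I * ↑a * ↑n))
        = conj (Complex.exp (2 * ↑π * Complex.I * ↑a * ↑n)) from rfl, ← Complex.exp_conj]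
      congr 1
      simp only [map_mul, Complex.conj_I, Complex.conj_ofReal, map_natCast, map_ofNat]
      push_cast
      ring
    · rw [cpow_natCast_real]
      exact Complex.conj_ofReal _
  have h2' : HasSum (fun n : ℕ => Complex.exp (2 * ↑π * Complex.I * ↑(-a : ℝ) * ↑n)
      / (n : ℂ) ^ (↑t : ℂ)) (conj (expZeta (↑a : UnitAddCircle) ↑t)) := by
    refine HasSum.congr_fun h2 fun n => ?_
    exact (key n).symm
  have := h1.unique h2'
  rwa [show ((↑(-a : ℝ) : UnitAddCircle)) = -(↑a : UnitAddCircle) by exact AddCircle.coe_neg 1] at this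

lemma exp_conj_aux (t : ℝ) :
    Complex.exp (↑π * Complex.I * ↑t / 2) = conj (Complex.exp (-↑π * Complex.I * ↑t / 2)) := by
  rw [← Complex.exp_conj]
  congr 1
  simp only [map_div₀, map_mul, map_neg, Complex.conj_I, Complex.conj_ofReal, map_ofNat]
  ring

lemma repA (a : ℝ) {t : ℝ} (ht : 1 < t) :
    hurwitzZeta (↑a : UnitAddCircle) (1 - ↑t) =
      ↑((2 * π) ^ (-t) * Real.Gamma t *
        (2 * (Complex.exp (-↑π * Complex.I * ↑t / 2) * expZeta (↑a : UnitAddCircle) ↑t).re)) := by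
  have hs : ∀ n : ℕ, (↑t : ℂ) ≠ -↑n := by
    intro n h
    have : t = -(n : ℝ) := by exact_mod_cast h
    have := Nat.cast_nonneg (α := ℝ) n
    linarith
  have hs' : (↑a : UnitAddCircle) ≠ 0 ∨ (↑t : ℂ) ≠ 1 := by
    right
    intro h
    rw [Complex.ofReal_eq_one] at h
    linarith
  rw [hurwitzZeta_one_sub (↑a : UnitAddCircle) hs hs']
  rw [expZeta_neg a ht, exp_conj_aux t, ← map_mul]
  rw [Complex.add_conj]
  rw [show ((2 : ℂ) * ↑π) = ((2 * π : ℝ) : ℂ) by push_cast; ring]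
  rw [show (-(↑t : ℂ)) = ((-t : ℝ) : ℂ) by push_cast; ring]
  rw [← Complex.ofReal_cpow (by positivity) (-t)]
  rw [Complex.Gamma_ofReal]
  push_cast
  ring

lemma zero_iff (a : ℝ) {t : ℝ} (ht : 1 < t) :
    hurwitzZeta (↑a : UnitAddCircle) (1 - ↑t) = 0 ↔
      (Complex.exp (-↑π * Complex.I * ↑t / 2) * expZeta (↑a : UnitAddCircle) ↑t).re = 0 := by
  rw [repA a ht, Complex.ofReal_eq_zero]
  have h1 : (0 : ℝ) < (2 * π) ^ (-t) := Real.rpow_pos_of_pos (by positivity) _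
  have h2 : (0 : ℝ) < Real.Gamma t := Real.Gamma_pos_of_pos (by linarith)
  constructor
  · intro h
    rcases mul_eq_zero.mp h with h | h
    · rcases mul_eq_zero.mp h with h | h
      · exact absurd h h1.ne'
      · exact absurd h h2.ne'
    · rcases mul_eq_zero.mp h with h | h
      · norm_num at h
      · exact h
  · intro h
    rw [h]
    ring

lemma endpoint (a : ℝ) (ha : 0 < a) (ha' : a ≤ 1) (k : ℕ) (hk : k ≠ 0) :
    hurwitzZeta (↑a : UnitAddCircle) (-(k : ℂ)) = ↑(-1 / ((k : ℝ) + 1) * bernoulliPoly (k + 1) a) := by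
  rw [hurwitzZeta_neg_nat hk (⟨ha.le, ha'⟩ : a ∈ Icc (0 : ℝ) 1)]
  have heval : ((Polynomial.bernoulli (k + 1)).map (algebraMap ℚ ℂ)).eval (↑a : ℂ)
      = ↑(bernoulliPoly (k + 1) a) := by
    rw [Polynomial.eval_map, ← Polynomial.aeval_def]
    have := Polynomial.aeval_algHom_apply
      (AlgHom.restrictScalars ℚ (Algebra.ofId ℝ ℂ)) a (Polynomial.bernoulli (k + 1))
    simpa [bernoulliPoly, Algebra.ofId_apply] using this
  rw [heval]
  push_cast
  ring


lemma norm_exp_pi_t (t : ℝ) : ‖Complex.exp (↑π * Complex.I * ↑t / 2)‖ = 1 := by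
  rw [show (↑π * Complex.I * ↑t / 2 : ℂ) = ↑(π * t / 2 : ℝ) * Complex.I by push_cast; ring,
    Complex.norm_exp_ofReal_mul_I]

lemma rotate (a : ℝ) {t : ℝ}
    (hf : (Complex.exp (-↑π * Complex.I * ↑t / 2) * expZeta (↑a : UnitAddCircle) ↑t).re = 0) :
    expZeta (↑a : UnitAddCircle) ↑t = Complex.exp (↑π * Complex.I * ↑t / 2) *
      (↑((Complex.exp (-↑π * Complex.I * ↑t / 2) * expZeta (↑a : UnitAddCircle) ↑t).im) *
        Complex.I) := by
  set u := Complex.exp (-↑π * Complex.I * ↑t / 2) * expZeta (↑a : UnitAddCircle) ↑t with hu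
  have hue : u = ↑u.im * Complex.I := by
    apply Complex.ext
    · simp [hf]
    · simp
  have hmul : Complex.exp (↑π * Complex.I * ↑t / 2) * u = expZeta (↑a : UnitAddCircle) ↑t := by
    rw [hu, ← mul_assoc, ← Complex.exp_add,
      show (↑π * Complex.I * ↑t / 2 + -↑π * Complex.I * ↑t / 2 : ℂ) = 0 by ring,
      Complex.exp_zero, one_mul]
  rw [← hmul, ← hue]


lemma arith (c1 c2 E d s co : ℝ) (hdpos : 0 < d) (hd1 : d < 1)
    (habs1 : 7 / 8 ≤ |c1|) (habs2 : 7 / 8 ≤ |c2|)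
    (hs : d / 2 ≤ s) (hco : co = 1 - 2 * s ^ 2) (hconn : 0 ≤ co)
    (hE : E ^ 2 = c1 ^ 2 + c2 ^ 2 - 2 * c1 * c2 * co) (hEnn : 0 ≤ E)
    (hEle : E ≤ 1 / 4 * d) : False := by
  have hEsq : E ^ 2 ≤ (1 / 4 * d) ^ 2 := by nlinarith
  have h1 : (7 / 8 : ℝ) ^ 2 ≤ c1 ^ 2 := by
    have := pow_le_pow_left₀ (by norm_num : (0:ℝ) ≤ 7/8) habs1 2
    rwa [_root_.sq_abs] at this
  have h2 : (7 / 8 : ℝ) ^ 2 ≤ c2 ^ 2 := by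
    have := pow_le_pow_left₀ (by norm_num : (0:ℝ) ≤ 7/8) habs2 2
    rwa [_root_.sq_abs] at this
  rcases le_or_gt (c1 * c2) 0 with hcc | hcc
  · have h3 : 0 ≤ -(2 * (c1 * c2)) * co := mul_nonneg (by linarith) hconn
    nlinarith [hE, hEsq, h1, h2, h3]
  · have hcc49 : 49 / 64 ≤ c1 * c2 := by
      have h0 := abs_mul c1 c2
      have ha : |c1 * c2| = c1 * c2 := abs_of_pos hcc
      nlinarith [abs_nonneg c1, abs_nonneg c2]
    have hsin2 : (d / 2) ^ 2 ≤ s ^ 2 := by nlinarith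
    have hEexp : E ^ 2 = (c1 - c2) ^ 2 + 4 * (c1 * c2) * s ^ 2 := by
      rw [hE, hco]; ring
    nlinarith [hEexp, hEsq, hcc49, hsin2, sq_nonneg (c1 - c2), sq_nonneg s,
      mul_pos hdpos hdpos]


set_option maxHeartbeats 1000000 in
lemma uniq (a : ℝ) {t1 t2 : ℝ} (h5 : 5 ≤ t1) (h12 : t1 < t2) (hd1 : t2 - t1 < 1)
    (hf1 : (Complex.exp (-↑π * Complex.I * ↑t1 / 2) * expZeta (↑a : UnitAddCircle) ↑t1).re = 0)
    (hf2 : (Complex.exp (-↑π * Complex.I * ↑t2 / 2) * expZeta (↑a : UnitAddCircle) ↑t2).re = 0) :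
    False := by
  have hdpos : 0 < t2 - t1 := by linarith
  -- mean value theorem
  have hMVT : ‖expZeta (↑a : UnitAddCircle) ↑t2 - expZeta (↑a : UnitAddCircle) ↑t1‖
      ≤ 1 / 4 * (t2 - t1) := by
    have hderiv : ∀ u ∈ Icc t1 t2,
        HasDerivWithinAt (fun u : ℝ => expZeta (↑a : UnitAddCircle) ↑u)
          (-LSeries (logMul (Fa a)) ↑u) (Icc t1 t2) u := by
      intro u hu
      exact (hasDerivAt_Z a (by linarith [hu.1] : (1:ℝ) < u)).hasDerivWithinAt
    have hbound : ∀ u ∈ Icc t1 t2, ‖-LSeries (logMul (Fa a)) ↑u‖ ≤ 1 / 4 := by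
      intro u hu
      rw [norm_neg]
      exact deriv_bound a (by linarith [hu.1])
    have h := (convex_Icc t1 t2).norm_image_sub_le_of_norm_hasDerivWithin_le hderiv hbound
      (left_mem_Icc.mpr h12.le) (right_mem_Icc.mpr h12.le)
    rw [Real.norm_eq_abs, abs_of_pos hdpos] at h
    exact h
  obtain ⟨c1, hZ1⟩ : ∃ c : ℝ, expZeta (↑a : UnitAddCircle) ↑t1
      = Complex.exp (↑π * Complex.I * ↑t1 / 2) * (↑c * Complex.I) := ⟨_, rotate a hf1⟩
  obtain ⟨c2, hZ2⟩ : ∃ c : ℝ, expZeta (↑a : UnitAddCircle) ↑t2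
      = Complex.exp (↑π * Complex.I * ↑t2 / 2) * (↑c * Complex.I) := ⟨_, rotate a hf2⟩
  have habs1 : 7 / 8 ≤ |c1| := by
    have h := Z_norm_ge a h5
    rw [hZ1, norm_mul, norm_exp_pi_t, one_mul, norm_mul, Complex.norm_real, Complex.norm_I,
      mul_one, Real.norm_eq_abs] at h
    exact h
  have habs2 : 7 / 8 ≤ |c2| := by
    have h := Z_norm_ge a (show (5:ℝ) ≤ t2 by linarith)
    rw [hZ2, norm_mul, norm_exp_pi_t, one_mul, norm_mul, Complex.norm_real, Complex.norm_I,
      mul_one, Real.norm_eq_abs] at h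
    exact h
  -- explicit norm of the difference
  have hdiff : expZeta (↑a : UnitAddCircle) ↑t2 - expZeta (↑a : UnitAddCircle) ↑t1 =
      ↑(c1 * Real.sin (π * t1 / 2) - c2 * Real.sin (π * t2 / 2)) +
      ↑(c2 * Real.cos (π * t2 / 2) - c1 * Real.cos (π * t1 / 2)) * Complex.I := by
    rw [hZ1, hZ2]
    rw [show (↑π * Complex.I * ↑t1 / 2 : ℂ) = ↑(π * t1 / 2 : ℝ) * Complex.I by push_cast; ring,
      show (↑π * Complex.I * ↑t2 / 2 : ℂ) = ↑(π * t2 / 2 : ℝ) * Complex.I by push_cast; ring,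
      Complex.exp_mul_I, Complex.exp_mul_I, ← Complex.ofReal_cos, ← Complex.ofReal_sin,
      ← Complex.ofReal_cos, ← Complex.ofReal_sin]
    apply Complex.ext <;> simp <;> ring
  obtain ⟨E, hEdef⟩ : ∃ E : ℝ,
      E = ‖expZeta (↑a : UnitAddCircle) ↑t2 - expZeta (↑a : UnitAddCircle) ↑t1‖ := ⟨_, rfl⟩
  have hnormsq : E ^ 2 =
      (c1 * Real.sin (π * t1 / 2) - c2 * Real.sin (π * t2 / 2)) ^ 2 +
      (c2 * Real.cos (π * t2 / 2) - c1 * Real.cos (π * t1 / 2)) ^ 2 := by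
    rw [hEdef, hdiff, Complex.sq_norm, Complex.normSq_add_mul_I]
  have hEnn : 0 ≤ E := hEdef ▸ norm_nonneg _
  have hEle' : E ≤ 1 / 4 * (t2 - t1) := hEdef ▸ hMVT
  -- trigonometric facts
  obtain ⟨γ, hγ⟩ : ∃ g : ℝ, g = π * (t2 - t1) / 4 := ⟨_, rfl⟩
  have hπ := Real.pi_pos
  have hcos2γ : Real.cos (π * t2 / 2) * Real.cos (π * t1 / 2)
      + Real.sin (π * t2 / 2) * Real.sin (π * t1 / 2) = Real.cos (2 * γ) := by
    rw [← Real.cos_sub]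
    congr 1
    rw [hγ]
    ring
  have hdouble : Real.cos (2 * γ) = 2 * Real.cos γ ^ 2 - 1 := Real.cos_two_mul γ
  have hpyth : Real.sin γ ^ 2 + Real.cos γ ^ 2 = 1 := Real.sin_sq_add_cos_sq γ
  have hpyth1 : Real.sin (π * t1 / 2) ^ 2 + Real.cos (π * t1 / 2) ^ 2 = 1 :=
    Real.sin_sq_add_cos_sq _
  have hpyth2 : Real.sin (π * t2 / 2) ^ 2 + Real.cos (π * t2 / 2) ^ 2 = 1 :=
    Real.sin_sq_add_cos_sq _
  have hsinγ : (t2 - t1) / 2 ≤ Real.sin γ := by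
    have h1 : (0:ℝ) ≤ γ := by rw [hγ]; positivity
    have h2 : γ ≤ π / 2 := by
      rw [hγ]
      linarith [mul_pos hπ (show (0:ℝ) < 1 - (t2 - t1) by linarith)]
    have h3 := Real.mul_le_sin h1 h2
    have heq : 2 / π * γ = (t2 - t1) / 2 := by
      rw [hγ]
      field_simp
      ring
    linarith [heq ▸ h3]
  have hcosnn : 0 ≤ Real.cos (2 * γ) := by
    apply Real.cos_nonneg_of_mem_Icc
    constructor
    · rw [hγ]
      linarith [mul_pos hπ hdpos]
    · rw [hγ]
      linarith [mul_pos hπ (show (0:ℝ) < 1 - (t2 - t1) by linarith)]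
  -- assemble
  have hE : E ^ 2 = c1 ^ 2 + c2 ^ 2 - 2 * c1 * c2 * Real.cos (2 * γ) := by
    rw [hnormsq, ← hcos2γ]
    linear_combination (c1 ^ 2) * hpyth1 + (c2 ^ 2) * hpyth2
  have hcos2 : Real.cos (2 * γ) = 1 - 2 * Real.sin γ ^ 2 := by linarith [hdouble, hpyth]
  exact arith c1 c2 E (t2 - t1) (Real.sin γ) (Real.cos (2 * γ)) hdpos hd1 habs1 habs2
    hsinγ hcos2 hcosnn hE hEnn hEle'

end HZaux

open HZaux

set_option maxHeartbeats 1000000 in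
/-- For an integer `N ≥ 4` and `0 < a ≤ 1` with `B_{N+1}(a)·B_{N+2}(a) < 0`, the Hurwitz
zeta function `σ ↦ ζ(σ, a)` has exactly one real zero in the open interval `(-N-1, -N)`. -/
theorem hurwitzZeta_exactly_one_zero_of_four_le (N : ℕ) (hN : 4 ≤ N) (a : ℝ) (ha : 0 < a)
    (ha' : a ≤ 1) (hB : bernoulliPoly (N + 1) a * bernoulliPoly (N + 2) a < 0) :
    ∃! σ : ℝ, σ ∈ Set.Ioo (-(N : ℝ) - 1) (-(N : ℝ)) ∧
      hurwitzZeta (a : UnitAddCircle) (σ : ℂ) = 0 := by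
  have hN5 : (5 : ℝ) ≤ (N : ℝ) + 1 := by
    have : (4 : ℝ) ≤ (N : ℝ) := by exact_mod_cast hN
    linarith
  set f : ℝ → ℝ :=
    fun t => (Complex.exp (-↑π * Complex.I * ↑t / 2) * expZeta (↑a : UnitAddCircle) ↑t).re with hf
  -- continuity
  have hcont : ContinuousOn f (Icc ((N : ℝ) + 1) ((N : ℝ) + 2)) := by
    intro t htmem
    have h1t : (1 : ℝ) < t := by
      have := htmem.1
      linarith
    apply ContinuousAt.continuousWithinAt
    have hg : ContinuousAt (fun t : ℝ =>
        Complex.exp (-↑π * Complex.I * ↑t / 2) * expZeta (↑a : UnitAddCircle) ↑t) t := by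
      apply ContinuousAt.mul
      · apply Continuous.continuousAt
        apply Complex.continuous_exp.comp
        fun_prop
      · exact (hasDerivAt_Z a h1t).continuousAt
    exact Complex.continuous_re.continuousAt.comp hg
  -- endpoint values
  have hq1 : -1 / ((N : ℝ) + 1) * bernoulliPoly (N + 1) a
      = (2 * π) ^ (-((N : ℝ) + 1)) * Real.Gamma ((N : ℝ) + 1) * (2 * f ((N : ℝ) + 1)) := by
    have r1 := repA a (show (1 : ℝ) < (N : ℝ) + 1 by linarith)
    have hcast1 : (1 - (((N : ℝ) + 1 : ℝ) : ℂ) : ℂ) = -(N : ℂ) := by push_cast; ring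
    rw [hcast1] at r1
    exact Complex.ofReal_inj.mp ((endpoint a ha ha' N (by omega)).symm.trans r1)
  have hq2 : -1 / ((N : ℝ) + 2) * bernoulliPoly (N + 2) a
      = (2 * π) ^ (-((N : ℝ) + 2)) * Real.Gamma ((N : ℝ) + 2) * (2 * f ((N : ℝ) + 2)) := by
    have r2 := repA a (show (1 : ℝ) < (N : ℝ) + 2 by linarith)
    have hcast2 : (1 - (((N : ℝ) + 2 : ℝ) : ℂ) : ℂ) = -((N + 1 : ℕ) : ℂ) := by push_cast; ring
    rw [hcast2] at r2
    have e2 := Complex.ofReal_inj.mp ((endpoint a ha ha' (N + 1) (by omega)).symm.trans r2)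
    rw [show (((N + 1 : ℕ) : ℝ) + 1) = (N : ℝ) + 2 by push_cast; ring] at e2
    exact e2
  -- sign of the product
  have hC1 : (0 : ℝ) < (2 * π) ^ (-((N : ℝ) + 1)) * Real.Gamma ((N : ℝ) + 1) :=
    mul_pos (Real.rpow_pos_of_pos (by positivity) _) (Real.Gamma_pos_of_pos (by linarith))
  have hC2 : (0 : ℝ) < (2 * π) ^ (-((N : ℝ) + 2)) * Real.Gamma ((N : ℝ) + 2) :=
    mul_pos (Real.rpow_pos_of_pos (by positivity) _) (Real.Gamma_pos_of_pos (by linarith))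
  have hNpos1 : (0 : ℝ) < (N : ℝ) + 1 := by linarith
  have hNpos2 : (0 : ℝ) < (N : ℝ) + 2 := by linarith
  have hq1' : bernoulliPoly (N + 1) a = -(((N : ℝ) + 1) *
      ((2 * π) ^ (-((N : ℝ) + 1)) * Real.Gamma ((N : ℝ) + 1) * (2 * f ((N : ℝ) + 1)))) := by
    have h := congrArg (fun y : ℝ => ((N : ℝ) + 1) * y) hq1
    rw [show ((N : ℝ) + 1) * (-1 / ((N : ℝ) + 1) * bernoulliPoly (N + 1) a)
      = -bernoulliPoly (N + 1) a by field_simp] at h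
    linarith [h]
  have hq2' : bernoulliPoly (N + 2) a = -(((N : ℝ) + 2) *
      ((2 * π) ^ (-((N : ℝ) + 2)) * Real.Gamma ((N : ℝ) + 2) * (2 * f ((N : ℝ) + 2)))) := by
    have h := congrArg (fun y : ℝ => ((N : ℝ) + 2) * y) hq2
    rw [show ((N : ℝ) + 2) * (-1 / ((N : ℝ) + 2) * bernoulliPoly (N + 2) a)
      = -bernoulliPoly (N + 2) a by field_simp] at h
    linarith [h]
  have hkey : f ((N : ℝ) + 1) * f ((N : ℝ) + 2) < 0 := by
    have hprodeq : bernoulliPoly (N + 1) a * bernoulliPoly (N + 2) a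
        = (((N : ℝ) + 1) * ((N : ℝ) + 2) *
            ((2 * π) ^ (-((N : ℝ) + 1)) * Real.Gamma ((N : ℝ) + 1)) *
            ((2 * π) ^ (-((N : ℝ) + 2)) * Real.Gamma ((N : ℝ) + 2)) * 4) *
          (f ((N : ℝ) + 1) * f ((N : ℝ) + 2)) := by
      rw [hq1', hq2']
      ring
    have hpos : (0 : ℝ) < ((N : ℝ) + 1) * ((N : ℝ) + 2) *
            ((2 * π) ^ (-((N : ℝ) + 1)) * Real.Gamma ((N : ℝ) + 1)) *
            ((2 * π) ^ (-((N : ℝ) + 2)) * Real.Gamma ((N : ℝ) + 2)) * 4 := by positivity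
    by_contra hcon
    push_neg at hcon
    have := mul_nonneg hpos.le hcon
    rw [← hprodeq] at this
    linarith
  -- existence of a zero via IVT
  have hle12 : ((N : ℝ) + 1) ≤ (N : ℝ) + 2 := by linarith
  have hexists : ∃ t0 ∈ Ioo ((N : ℝ) + 1) ((N : ℝ) + 2), f t0 = 0 := by
    rcases mul_neg_iff.mp hkey with ⟨h1pos, h2neg⟩ | ⟨h1neg, h2pos⟩
    · have h0 : (0 : ℝ) ∈ Ioo (f ((N : ℝ) + 2)) (f ((N : ℝ) + 1)) := ⟨h2neg, h1pos⟩
      obtain ⟨t0, ht0, hft0⟩ := intermediate_value_Ioo' hle12 hcont h0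
      exact ⟨t0, ht0, hft0⟩
    · have h0 : (0 : ℝ) ∈ Ioo (f ((N : ℝ) + 1)) (f ((N : ℝ) + 2)) := ⟨h1neg, h2pos⟩
      obtain ⟨t0, ht0, hft0⟩ := intermediate_value_Ioo hle12 hcont h0
      exact ⟨t0, ht0, hft0⟩
  obtain ⟨t0, ht0mem, hft0⟩ := hexists
  have h1t0 : (1 : ℝ) < t0 := by linarith [ht0mem.1]
  refine ⟨1 - t0, ⟨⟨by linarith [ht0mem.2], by linarith [ht0mem.1]⟩, ?_⟩, ?_⟩
  · have : ((1 - t0 : ℝ) : ℂ) = 1 - (t0 : ℂ) := by push_cast; ring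
    rw [this]
    exact (zero_iff a h1t0).mpr hft0
  · rintro σ' ⟨⟨hm1, hm2⟩, hz⟩
    have h1t' : (1 : ℝ) < 1 - σ' := by linarith
    have hft' : f (1 - σ') = 0 := by
      apply (zero_iff a h1t').mp
      rw [show (1 - ((1 - σ' : ℝ) : ℂ) : ℂ) = (σ' : ℂ) by push_cast; ring]
      exact hz
    have htmem' : (1 - σ') ∈ Ioo ((N : ℝ) + 1) ((N : ℝ) + 2) := ⟨by linarith, by linarith⟩
    have : 1 - σ' = t0 := by
      rcases lt_trichotomy (1 - σ') t0 with h | h | h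
      · exact absurd (uniq a (by linarith [htmem'.1]) h
          (by linarith [htmem'.1, ht0mem.2]) hft' hft0) not_false
      · exact h
      · exact absurd (uniq a (by linarith [ht0mem.1]) h
          (by linarith [ht0mem.1, htmem'.2]) hft0 hft') not_false
    linarith
end
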